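/- arXiv:2202.08567 — 7 statements merged into one kernel-verified Lean document; each statement's English description precedes it below -/
import Mathlib

section
/- Let X be a smooth real Banach space and let C₁, C₂ ⊆ X be closed convex sets. Let x₁ ∈ C₁, x₂ ∈ C₂ with x₁ ≠ x₂, and let w⋆ be the unique element of the normalized duality mapping at x₂ − x₁. If x₁ is a nearest point in C₁ to x₂ and x₂ is a nearest point in C₂ to x₁, then ‖x₁ − x₂‖ = dist(C₁, C₂). -/
/-- The normalized duality mapping `M(x) = {x* : x*(x) = ‖x‖² = ‖x*‖²}`. -/
def dualityMap {X : Type*} [NormedAddCommGroup X] [NormedSpace ℝ X] (x : X) :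
    Set (X →L[ℝ] ℝ) :=
  {f : X →L[ℝ] ℝ | f x = ‖x‖ ^ 2 ∧ ‖x‖ ^ 2 = ‖f‖ ^ 2}

/-- Distance between two sets: `dist(A,B) = inf {‖a − b‖ : a ∈ A, b ∈ B}`. -/
noncomputable def setDist {X : Type*} [NormedAddCommGroup X] (A B : Set X) : ℝ :=
  sInf (Set.image2 (fun a b => ‖a - b‖) A B)

section Aux

open Pointwise

variable {X : Type*} [NormedAddCommGroup X] [NormedSpace ℝ X]

/-- Difference quotient of the norm at `u` in direction `w`. -/
noncomputable def dqAux (u w : X) (t : ℝ) : ℝ := (‖u + t • w‖ - ‖u‖) / t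

/-- Right Gateaux derivative of the norm at `u` in direction `w`,
realized as an infimum of difference quotients. -/
noncomputable def qAux (u w : X) : ℝ := sInf (dqAux u w '' Set.Ioi 0)

lemma neg_norm_le_dqAux (u w : X) {t : ℝ} (ht : 0 < t) : -‖w‖ ≤ dqAux u w t := by
  rw [dqAux, le_div_iff₀ ht]
  have h1 : ‖u‖ - ‖t • w‖ ≤ ‖u + t • w‖ := by
    have := norm_sub_norm_le u (u + t • w)
    have h0 : u - (u + t • w) = -(t • w) := by abel
    rw [h0, norm_neg] at this
    linarith
  have h2 : ‖t • w‖ = t * ‖w‖ := by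
    rw [norm_smul, Real.norm_eq_abs, abs_of_pos ht]
  nlinarith

lemma dqAux_mono (u w : X) {s t : ℝ} (hs : 0 < s) (hst : s ≤ t) :
    dqAux u w s ≤ dqAux u w t := by
  have ht : 0 < t := hs.trans_le hst
  have hdiv : s / t ≤ 1 := (div_le_one ht).2 hst
  have key : ‖u + s • w‖ ≤ (1 - s / t) * ‖u‖ + (s / t) * ‖u + t • w‖ := by
    have hco : u + s • w = (1 - s / t) • u + (s / t) • (u + t • w) := by
      rw [smul_add, smul_smul, div_mul_cancel₀ s ht.ne']
      module
    calc ‖u + s • w‖ = ‖(1 - s / t) • u + (s / t) • (u + t • w)‖ := by rw [← hco]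
      _ ≤ ‖(1 - s / t) • u‖ + ‖(s / t) • (u + t • w)‖ := norm_add_le _ _
      _ = (1 - s / t) * ‖u‖ + (s / t) * ‖u + t • w‖ := by
          rw [norm_smul, norm_smul, Real.norm_eq_abs, Real.norm_eq_abs,
            abs_of_nonneg (by linarith), abs_of_nonneg (by positivity)]
  rw [dqAux, dqAux, div_le_div_iff₀ hs ht]
  have hkey2 := mul_le_mul_of_nonneg_left key ht.le
  have hexp : t * ((1 - s / t) * ‖u‖ + s / t * ‖u + t • w‖)
      = (t - s) * ‖u‖ + s * ‖u + t • w‖ := by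
    field_simp
  rw [hexp] at hkey2
  nlinarith

lemma dqAux_image_nonempty (u w : X) : (dqAux u w '' Set.Ioi 0).Nonempty :=
  ⟨dqAux u w 1, Set.mem_image_of_mem _ (by norm_num)⟩

lemma dqAux_bddBelow (u w : X) : BddBelow (dqAux u w '' Set.Ioi 0) := by
  refine ⟨-‖w‖, ?_⟩
  rintro x ⟨t, ht, rfl⟩
  exact neg_norm_le_dqAux u w ht

lemma qAux_le_dqAux (u w : X) {t : ℝ} (ht : 0 < t) : qAux u w ≤ dqAux u w t :=
  csInf_le (dqAux_bddBelow u w) (Set.mem_image_of_mem _ ht)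

lemma qAux_le_norm (u w : X) : qAux u w ≤ ‖w‖ := by
  refine (qAux_le_dqAux u w one_pos).trans ?_
  rw [dqAux]
  simp only [one_smul, div_one]
  have := norm_add_le u w
  linarith

lemma le_qAux (u w : X) {c : ℝ} (h : ∀ t : ℝ, 0 < t → c ≤ dqAux u w t) :
    c ≤ qAux u w := by
  refine le_csInf (dqAux_image_nonempty u w) ?_
  rintro x ⟨t, ht, rfl⟩
  exact h t ht

lemma qAux_zero (u : X) : qAux u 0 = 0 := by
  apply le_antisymm
  · refine (qAux_le_dqAux u 0 one_pos).trans ?_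
    rw [dqAux]; simp
  · refine le_qAux u 0 ?_
    intro t ht
    rw [dqAux]; simp

lemma qAux_smul (u w : X) {c : ℝ} (hc : 0 < c) : qAux u (c • w) = c * qAux u w := by
  have himg : dqAux u (c • w) '' Set.Ioi 0 = (fun x => c * x) '' (dqAux u w '' Set.Ioi 0) := by
    ext x
    constructor
    · rintro ⟨t, ht, rfl⟩
      rw [Set.mem_Ioi] at ht
      refine ⟨dqAux u w (c * t), ⟨c * t, by simp [Set.mem_Ioi]; positivity, rfl⟩, ?_⟩
      rw [dqAux, dqAux, smul_smul, mul_comm t c]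
      field_simp
    · rintro ⟨y, ⟨t, ht, rfl⟩, rfl⟩
      rw [Set.mem_Ioi] at ht
      refine ⟨t / c, by simp [Set.mem_Ioi]; positivity, ?_⟩
      rw [dqAux, dqAux, smul_smul, mul_comm (t / c) c, mul_div_cancel₀ t hc.ne']
      field_simp
  rw [qAux, himg, qAux]
  have := Real.sInf_smul_of_nonneg hc.le (dqAux u w '' Set.Ioi 0)
  have himg2 : c • (dqAux u w '' Set.Ioi 0) = (fun x => c * x) '' (dqAux u w '' Set.Ioi 0) := by
    ext x
    simp [Set.mem_smul_set, smul_eq_mul]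
  rw [himg2] at this
  rw [this, smul_eq_mul]

lemma qAux_add (u w₁ w₂ : X) : qAux u (w₁ + w₂) ≤ qAux u w₁ + qAux u w₂ := by
  have key : ∀ s r : ℝ, 0 < s → 0 < r →
      qAux u (w₁ + w₂) ≤ dqAux u w₁ s + dqAux u w₂ r := by
    intro s r hs hr
    set t := min s r / 2 with ht_def
    have ht : 0 < t := by positivity
    have h2t : 0 < 2 * t := by positivity
    have hq : qAux u (w₁ + w₂) ≤ dqAux u (w₁ + w₂) t := qAux_le_dqAux u _ ht
    have hsplit : dqAux u (w₁ + w₂) t ≤ dqAux u w₁ (2 * t) + dqAux u w₂ (2 * t) := by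
      have hco : u + t • (w₁ + w₂) =
          (1 / 2 : ℝ) • (u + (2 * t) • w₁) + (1 / 2 : ℝ) • (u + (2 * t) • w₂) := by
        module
      have hn : ‖u + t • (w₁ + w₂)‖ ≤
          (1 / 2) * ‖u + (2 * t) • w₁‖ + (1 / 2) * ‖u + (2 * t) • w₂‖ := by
        rw [hco]
        refine (norm_add_le _ _).trans ?_
        rw [norm_smul, norm_smul]
        norm_num
      rw [dqAux, dqAux, dqAux]
      rw [← add_div, div_le_div_iff₀ ht h2t]
      nlinarith
    have h1 : dqAux u w₁ (2 * t) ≤ dqAux u w₁ s :=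
      dqAux_mono u w₁ h2t (by rw [ht_def]; have := min_le_left s r; linarith)
    have h2 : dqAux u w₂ (2 * t) ≤ dqAux u w₂ r :=
      dqAux_mono u w₂ h2t (by rw [ht_def]; have := min_le_right s r; linarith)
    linarith
  have step1 : ∀ r : ℝ, 0 < r → qAux u (w₁ + w₂) - dqAux u w₂ r ≤ qAux u w₁ := by
    intro r hr
    refine le_csInf (dqAux_image_nonempty u w₁) ?_
    rintro x ⟨s, hs, rfl⟩
    have := key s r hs hr
    linarith
  have step2 : qAux u (w₁ + w₂) - qAux u w₁ ≤ qAux u w₂ := by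
    refine le_csInf (dqAux_image_nonempty u w₂) ?_
    rintro x ⟨r, hr, rfl⟩
    have := step1 r hr
    linarith
  linarith

lemma qAux_smul_self (u : X) (c : ℝ) : qAux u (c • u) = c * ‖u‖ := by
  have hdq : ∀ t : ℝ, 0 < t → dqAux u (c • u) t = (|1 + t * c| - 1) * ‖u‖ / t := by
    intro t ht
    rw [dqAux, smul_smul]
    have h : u + (t * c) • u = (1 + t * c) • u := by module
    rw [h, norm_smul, Real.norm_eq_abs]
    ring_nf
  apply le_antisymm
  · set t := 1 / (2 * (|c| + 1)) with ht_def
    have ht : 0 < t := by positivity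
    have habs : 0 < 1 + t * c := by
      have h2 : t * |c| < 1 := by
        rw [ht_def, div_mul_eq_mul_div, one_mul, div_lt_one (by positivity)]
        nlinarith [abs_nonneg c]
      have h3 : -(t * |c|) ≤ t * c := by
        have := neg_abs_le c
        nlinarith
      linarith
    refine (qAux_le_dqAux u _ ht).trans ?_
    rw [hdq t ht, abs_of_pos habs]
    rw [div_le_iff₀ ht]
    ring_nf
    nlinarith [norm_nonneg u]
  · refine le_qAux u _ ?_
    intro t ht
    rw [hdq t ht, le_div_iff₀ ht]
    have h := le_abs_self (1 + t * c)
    nlinarith [norm_nonneg u]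

/-- Key lemma: if moving from `u` a little in direction `-v` does not decrease the norm,
then the (unique) duality functional at `u` is nonpositive at `v`. -/
lemma key_lemma {u : X} (hu : u ≠ 0) (ws : X →L[ℝ] ℝ) (hws : dualityMap u = {ws})
    (v : X) (hv : ∀ t : ℝ, 0 < t → t ≤ 1 → ‖u‖ ≤ ‖u - t • v‖) : ws v ≤ 0 := by
  by_cases hv0 : v = 0
  · simp [hv0]
  -- q(-v) ≥ 0
  have hqneg : 0 ≤ qAux u (-v) := by
    refine le_qAux u _ ?_
    intro t ht
    rcases le_or_gt t 1 with ht1 | ht1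
    · rw [dqAux]
      have h : u + t • (-v) = u - t • v := by module
      rw [h]
      have := hv t ht ht1
      exact div_nonneg (by linarith) ht.le
    · refine le_trans ?_ (dqAux_mono u (-v) one_pos ht1.le)
      rw [dqAux]
      simp only [one_smul, div_one]
      have h : u + (-v) = u - (1 : ℝ) • v := by module
      rw [h]
      have := hv 1 one_pos le_rfl
      linarith
  -- sum of opposite derivatives is nonnegative
  have hsum : 0 ≤ qAux u v + qAux u (-v) := by
    have h1 := qAux_add u v (-v)
    have h2 : qAux u (v + -v) = 0 := by
      rw [add_neg_cancel, qAux_zero]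
    linarith
  -- build linear functional via Hahn-Banach
  set c : ℝ := -(qAux u (-v)) with hc_def
  set fp : X →ₗ.[ℝ] ℝ := LinearPMap.mkSpanSingleton v c hv0 with hfp_def
  have hdom : ∀ x : fp.domain, fp x ≤ qAux u x := by
    rintro ⟨x, hx⟩
    have hx' : x ∈ Submodule.span ℝ {v} := by
      have := hx
      rwa [hfp_def, LinearPMap.domain_mkSpanSingleton] at this
    rw [Submodule.mem_span_singleton] at hx'
    obtain ⟨a, rfl⟩ := hx'
    have happ : fp ⟨a • v, hx⟩ = a • c :=
      LinearPMap.mkSpanSingleton'_apply v c _ a hx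
    rw [happ, smul_eq_mul]
    show a * c ≤ qAux u (a • v)
    rcases lt_trichotomy a 0 with ha | ha | ha
    · have h : a • v = (-a) • (-v) := by module
      rw [h, qAux_smul u (-v) (by linarith)]
      rw [hc_def]
      nlinarith
    · subst ha
      simp [qAux_zero]
    · rw [qAux_smul u v ha, hc_def]
      nlinarith
  obtain ⟨g, hg_ext, hg_le⟩ := exists_extension_of_le_sublinear fp (qAux u)
    (fun c' hc' x => qAux_smul u x hc') (qAux_add u) hdom
  -- g norms u
  have hgu : g u = ‖u‖ := by
    have h1 : g u ≤ ‖u‖ := by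
      have := hg_le u
      have h2 : qAux u u = ‖u‖ := by
        have := qAux_smul_self u 1
        simpa using this
      linarith
    have h2 : g (-u) ≤ -‖u‖ := by
      have := hg_le (-u)
      have h3 : qAux u (-u) = -‖u‖ := by
        have := qAux_smul_self u (-1)
        simpa using this
      linarith
    have h3 : g (-u) = -(g u) := by rw [map_neg]
    linarith
  -- g is bounded
  have hgb : ∀ x : X, ‖g x‖ ≤ 1 * ‖x‖ := by
    intro x
    rw [Real.norm_eq_abs, one_mul, abs_le]
    constructor
    · have h1 := (hg_le (-x)).trans (qAux_le_norm u (-x))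
      rw [map_neg, norm_neg] at h1
      linarith
    · exact (hg_le x).trans (qAux_le_norm u x)
  set G : X →L[ℝ] ℝ := g.mkContinuous 1 hgb with hG_def
  have hGapp : ∀ x, G x = g x := fun x => rfl
  have hGnorm : ‖G‖ = 1 := by
    have hle : ‖G‖ ≤ 1 := g.mkContinuous_norm_le zero_le_one hgb
    have hge : 1 ≤ ‖G‖ := by
      have h1 : ‖G u‖ ≤ ‖G‖ * ‖u‖ := G.le_opNorm u
      rw [hGapp, hgu, Real.norm_eq_abs, abs_of_nonneg (norm_nonneg u)] at h1
      have hupos : 0 < ‖u‖ := norm_pos_iff.2 hu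
      nlinarith
    linarith
  -- ‖u‖ • G is in the duality map
  have hmem : (‖u‖ • G : X →L[ℝ] ℝ) ∈ dualityMap u := by
    simp only [dualityMap, Set.mem_setOf_eq]
    constructor
    · rw [ContinuousLinearMap.smul_apply, hGapp, hgu, smul_eq_mul]
      ring
    · have hn : ‖(‖u‖ • G : X →L[ℝ] ℝ)‖ = ‖u‖ := by
        have h := norm_smul ‖u‖ G
        simp only [Real.norm_eq_abs, abs_of_nonneg (norm_nonneg u), hGnorm, mul_one] at h
        exact h
      rw [hn]
  have hFeq : (‖u‖ • G : X →L[ℝ] ℝ) = ws := by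
    rw [hws] at hmem
    exact hmem
  -- evaluate at v
  have hgv : g v = c := by
    have hvm : v ∈ fp.domain := by
      rw [hfp_def, LinearPMap.domain_mkSpanSingleton]
      exact Submodule.mem_span_singleton_self v
    have := hg_ext ⟨v, hvm⟩
    rw [this]
    exact LinearPMap.mkSpanSingleton_apply ℝ ℝ hv0 c
  have : ws v = ‖u‖ * c := by
    rw [← hFeq, ContinuousLinearMap.smul_apply, hGapp, hgv, smul_eq_mul]
  rw [this, hc_def]
  nlinarith [norm_nonneg u]

end Aux

theorem dist_eq_of_mutual_nearest_points
    {X : Type*} [NormedAddCommGroup X] [NormedSpace ℝ X] [CompleteSpace X]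
    (hsmooth : ∀ y : X, y ≠ 0 → (dualityMap y).Subsingleton)
    (C₁ C₂ : Set X) (hC₁ : IsClosed C₁) (hC₂ : IsClosed C₂)
    (hconv₁ : Convex ℝ C₁) (hconv₂ : Convex ℝ C₂)
    (x₁ : X) (x₂ : X) (hx₁ : x₁ ∈ C₁) (hx₂ : x₂ ∈ C₂) (hne : x₁ ≠ x₂)
    (ws : X →L[ℝ] ℝ) (hws : dualityMap (x₂ - x₁) = {ws})
    (hnear₁ : ∀ y ∈ C₁, ‖x₂ - x₁‖ ≤ ‖x₂ - y‖)
    (hnear₂ : ∀ y ∈ C₂, ‖x₁ - x₂‖ ≤ ‖x₁ - y‖) :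
    ‖x₁ - x₂‖ = setDist C₁ C₂ := by
  set u := x₂ - x₁ with hu_def
  have hu : u ≠ 0 := sub_ne_zero.2 (Ne.symm hne)
  have hupos : 0 < ‖u‖ := norm_pos_iff.2 hu
  have hwsmem : ws ∈ dualityMap u := by rw [hws]; rfl
  have hws_u : ws u = ‖u‖ ^ 2 := hwsmem.1
  have hws_norm : ‖ws‖ = ‖u‖ := by
    have h := hwsmem.2
    nlinarith [norm_nonneg ws, norm_nonneg u, sq_nonneg (‖ws‖ - ‖u‖), sq_nonneg (‖ws‖ + ‖u‖)]
  have h12 : ‖x₁ - x₂‖ = ‖u‖ := by rw [hu_def, norm_sub_rev]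
  -- lower bound on distances
  have lowb : ∀ a ∈ C₁, ∀ b ∈ C₂, ‖u‖ ≤ ‖a - b‖ := by
    intro a ha b hb
    have h₁ : ws (a - x₁) ≤ 0 := by
      refine key_lemma hu ws hws (a - x₁) ?_
      intro t ht ht1
      have hp : x₁ + t • (a - x₁) ∈ C₁ := by
        have := hconv₁ hx₁ ha (a := 1 - t) (b := t) (by linarith) ht.le (by ring)
        have he : (1 - t) • x₁ + t • a = x₁ + t • (a - x₁) := by module
        rwa [he] at this
      have := hnear₁ _ hp
      have he : x₂ - (x₁ + t • (a - x₁)) = u - t • (a - x₁) := by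
        rw [hu_def]; module
      rwa [he] at this
    have h₂ : ws (x₂ - b) ≤ 0 := by
      refine key_lemma hu ws hws (x₂ - b) ?_
      intro t ht ht1
      have hp : x₂ + t • (b - x₂) ∈ C₂ := by
        have := hconv₂ hx₂ hb (a := 1 - t) (b := t) (by linarith) ht.le (by ring)
        have he : (1 - t) • x₂ + t • b = x₂ + t • (b - x₂) := by module
        rwa [he] at this
      have := hnear₂ _ hp
      have he : x₁ - (x₂ + t • (b - x₂)) = -(u - t • (x₂ - b)) := by
        rw [hu_def]; module
      rw [he, norm_neg] at this
      calc ‖u‖ = ‖x₁ - x₂‖ := h12.symm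
        _ ≤ ‖u - t • (x₂ - b)‖ := this
    have hsum : ws (b - a) = ws u - ws (a - x₁) - ws (x₂ - b) := by
      have he : b - a = u - (a - x₁) - (x₂ - b) := by rw [hu_def]; module
      rw [he, map_sub, map_sub]
    have hlow : ‖u‖ ^ 2 ≤ ws (b - a) := by
      rw [hsum, hws_u]; linarith
    have hup : ws (b - a) ≤ ‖u‖ * ‖b - a‖ := by
      have h1 : ws (b - a) ≤ ‖ws (b - a)‖ := le_abs_self _
      have h2 : ‖ws (b - a)‖ ≤ ‖ws‖ * ‖b - a‖ := ws.le_opNorm _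
      rw [hws_norm] at h2
      linarith
    rw [norm_sub_rev a b]
    have h3 : ‖u‖ * ‖u‖ ≤ ‖u‖ * ‖b - a‖ := by nlinarith
    exact le_of_mul_le_mul_left h3 hupos
  apply le_antisymm
  · refine le_csInf ⟨‖x₁ - x₂‖, Set.mem_image2_of_mem hx₁ hx₂⟩ ?_
    rintro z ⟨a, ha, b, hb, rfl⟩
    rw [h12]
    exact lowb a ha b hb
  · exact csInf_le ⟨0, by rintro z ⟨a, ha, b, hb, rfl⟩; exact norm_nonneg _⟩
      (Set.mem_image2_of_mem hx₁ hx₂)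
end

section
/- Let X be a smooth real Banach space, C₁, C₂ closed convex sets, x₁ ∈ C₁, x₂ ∈ C₂ with ‖x₁ − x₂‖ = dist(C₁, C₂) > 0. Let w⋆ be the unique element of the duality mapping at x₂ − x₁ and H = {x : w⋆(x) = w⋆((x₁+x₂)/2)}. Then dist(H, C₁) = dist(H, C₂) = ½‖x₁ − x₂‖. -/
set_option maxHeartbeats 1000000 in
lemma key_nonneg {X : Type*} [NormedAddCommGroup X] [NormedSpace ℝ X]
    (z : X) (hz : z ≠ 0) (ws : X →L[ℝ] ℝ) (hws : dualityMap z = {ws})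
    (u : X) (hu : ∀ t : ℝ, 0 < t → t ≤ 1 → ‖z‖ ≤ ‖z + t • u‖) : 0 ≤ ws u := by
  rcases eq_or_ne u 0 with rfl | hu0
  · simp
  set d := ‖z‖ with hd_def
  have hd : 0 < d := norm_pos_iff.mpr hz
  set q : X → ℝ → ℝ := fun v t => (‖z + t • v‖ - d) / t with hq_def
  set S : X → Set ℝ := fun v => q v '' Set.Ioi 0 with hS_def
  have hSne : ∀ v, (S v).Nonempty := fun v => ⟨q v 1, 1, Set.mem_Ioi.mpr one_pos, rfl⟩
  have hlb : ∀ v, ∀ r ∈ S v, -‖v‖ ≤ r := by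
    rintro v r ⟨t, ht, rfl⟩
    rw [Set.mem_Ioi] at ht
    rw [le_div_iff₀ ht]
    have h1 : d - ‖z + t • v‖ ≤ ‖z - (z + t • v)‖ := norm_sub_norm_le _ _
    have h2 : ‖z - (z + t • v)‖ = t * ‖v‖ := by
      rw [show z - (z + t • v) = -(t • v) by abel, norm_neg, norm_smul,
        Real.norm_eq_abs, abs_of_pos ht]
    nlinarith
  have hbdd : ∀ v, BddBelow (S v) := fun v => ⟨-‖v‖, hlb v⟩
  set N : X → ℝ := fun v => sInf (S v) with hN_def
  have hmono : ∀ v, ∀ s t : ℝ, 0 < s → s ≤ t → q v s ≤ q v t := by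
    intro v s t hs hst
    have ht : 0 < t := lt_of_lt_of_le hs hst
    have hid : z + s • v = ((t - s)/t) • z + (s/t) • (z + t • v) := by
      rw [smul_add, smul_smul, div_mul_cancel₀ _ ht.ne']
      rw [show ((t-s)/t : ℝ) = 1 - s/t by field_simp]
      rw [sub_smul, one_smul]; abel
    have hnorm : ‖z + s • v‖ ≤ ((t - s)/t) * d + (s/t) * ‖z + t • v‖ := by
      calc ‖z + s • v‖ ≤ ‖((t - s)/t) • z‖ + ‖(s/t) • (z + t • v)‖ := by
            rw [hid]; exact norm_add_le _ _
        _ = ((t - s)/t) * d + (s/t) * ‖z + t • v‖ := by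
            rw [norm_smul, norm_smul, Real.norm_eq_abs, Real.norm_eq_abs,
              abs_of_nonneg (div_nonneg (by linarith) ht.le), abs_of_nonneg (div_nonneg hs.le ht.le)]
    rw [hq_def]
    simp only
    rw [div_le_div_iff₀ hs ht]
    have h3 : t * ‖z + s • v‖ ≤ (t - s) * d + s * ‖z + t • v‖ := by
      have := mul_le_mul_of_nonneg_left hnorm ht.le
      field_simp at this
      linarith
    nlinarith
  have hN_mem : ∀ v, ∀ t : ℝ, 0 < t → N v ≤ q v t := by
    intro v t ht
    exact csInf_le (hbdd v) ⟨t, Set.mem_Ioi.mpr ht, rfl⟩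
  have hN0 : N 0 = 0 := by
    refine le_antisymm ?_ ?_
    · have := hN_mem 0 1 one_pos
      simpa [hq_def, ← hd_def] using this
    · apply le_csInf (hSne 0)
      rintro r ⟨t, ht, rfl⟩
      rw [Set.mem_Ioi] at ht
      simp [hq_def, ← hd_def]
  have hNhom : ∀ c : ℝ, 0 < c → ∀ v, N (c • v) = c * N v := by
    have half : ∀ c : ℝ, 0 < c → ∀ v, N (c • v) ≤ c * N v := by
      intro c hc v
      rw [← div_le_iff₀' hc]
      apply le_csInf (hSne v)
      rintro r ⟨t, ht, rfl⟩
      rw [Set.mem_Ioi] at ht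
      rw [div_le_iff₀' hc]
      have h1 : N (c • v) ≤ q (c • v) (t / c) := hN_mem _ _ (by positivity)
      have h2 : q (c • v) (t / c) = c * q v t := by
        rw [hq_def]
        simp only
        rw [smul_smul, div_mul_eq_mul_div, mul_comm t c, mul_div_cancel_left₀ _ hc.ne']
        field_simp
      linarith
    intro c hc v
    refine le_antisymm (half c hc v) ?_
    have := half c⁻¹ (by positivity) (c • v)
    rw [smul_smul, inv_mul_cancel₀ hc.ne', one_smul] at this
    calc c * N v ≤ c * (c⁻¹ * N (c • v)) := by
          exact mul_le_mul_of_nonneg_left this hc.le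
      _ = N (c • v) := by field_simp
  have hNadd : ∀ a b : X, N (a + b) ≤ N a + N b := by
    intro a b
    refine le_of_forall_pos_le_add ?_
    intro ε hε
    obtain ⟨r₁, ⟨t₁, ht₁, rfl⟩, hr₁⟩ := exists_lt_of_csInf_lt (hSne a) (show sInf (S a) < N a + ε/2 by simp only [hN_def]; linarith)
    obtain ⟨r₂, ⟨t₂, ht₂, rfl⟩, hr₂⟩ := exists_lt_of_csInf_lt (hSne b) (show sInf (S b) < N b + ε/2 by simp only [hN_def]; linarith)
    rw [Set.mem_Ioi] at ht₁ ht₂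
    set t := min t₁ t₂ with ht_def
    have ht : 0 < t := lt_min ht₁ ht₂
    have key : q (a + b) (t/2) ≤ q a t + q b t := by
      have hid : z + (t/2) • (a + b) = (1/2 : ℝ) • (z + t • a) + (1/2 : ℝ) • (z + t • b) := by
        rw [smul_add, smul_add, smul_add, smul_smul, smul_smul]
        rw [show (1/2 : ℝ) * t = t/2 by ring]
        rw [show (1/2:ℝ) • z + (t/2) • a + ((1/2:ℝ) • z + (t/2) • b) = ((1/2:ℝ)+(1/2:ℝ)) • z + (t/2) • a + (t/2) • b by rw [add_smul]; abel]
        norm_num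
        abel
      have hnorm : ‖z + (t/2) • (a + b)‖ ≤ (1/2) * ‖z + t • a‖ + (1/2) * ‖z + t • b‖ := by
        calc ‖z + (t/2) • (a + b)‖ ≤ ‖(1/2 : ℝ) • (z + t • a)‖ + ‖(1/2 : ℝ) • (z + t • b)‖ := by
              rw [hid]; exact norm_add_le _ _
          _ = (1/2) * ‖z + t • a‖ + (1/2) * ‖z + t • b‖ := by
              rw [norm_smul, norm_smul]; norm_num
      rw [hq_def]
      simp only
      rw [← add_div, div_le_div_iff₀ (by positivity) ht]
      nlinarith
    have h1 : N (a + b) ≤ q (a + b) (t/2) := hN_mem _ _ (by positivity)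
    have h2 : q a t ≤ q a t₁ := hmono a t t₁ ht (min_le_left _ _)
    have h3 : q b t ≤ q b t₂ := hmono b t t₂ ht (min_le_right _ _)
    linarith
  have hNle : ∀ v, N v ≤ ‖v‖ := by
    intro v
    have h1 : N v ≤ q v 1 := hN_mem _ _ one_pos
    have h2 : q v 1 ≤ ‖v‖ := by
      rw [hq_def]
      simp only [one_smul, div_one]
      have := norm_add_le z v
      linarith
    linarith
  -- Hahn-Banach extension
  set f : X →ₗ.[ℝ] ℝ := LinearPMap.mkSpanSingleton u (N u) hu0 with hf_def
  have hfle : ∀ x : f.domain, f x ≤ N x := by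
    rintro ⟨x, hx⟩
    obtain ⟨c, rfl⟩ := Submodule.mem_span_singleton.mp hx
    have happ : f ⟨c • u, hx⟩ = c • N u := LinearPMap.mkSpanSingleton'_apply u (N u) _ c hx
    rw [happ]
    rcases lt_trichotomy c 0 with hc | rfl | hc
    · have h1 : 0 ≤ N (c • u) + N (-(c • u)) := by
        have := hNadd (c • u) (-(c • u))
        simp only [add_neg_cancel, hN0] at this
        linarith
      have h2 : N (-(c • u)) = -c * N u := by
        rw [show -(c • u) = (-c) • u by rw [neg_smul]]
        exact hNhom (-c) (by linarith) u
      simp only [smul_eq_mul]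
      nlinarith
    · simp [hN0]
    · rw [smul_eq_mul, ← hNhom c hc u]
  obtain ⟨g, hgf, hgN⟩ := exists_extension_of_le_sublinear f N hNhom hNadd hfle
  have hgu : g u = N u := by
    have hmem : u ∈ f.domain := Submodule.mem_span_singleton_self u
    have h2 : f ⟨u, hmem⟩ = N u := LinearPMap.mkSpanSingleton'_apply_self _ _ _ _
    rw [hgf ⟨u, hmem⟩, h2]
  have hgbound : ∀ x, ‖g x‖ ≤ 1 * ‖x‖ := by
    intro x
    rw [one_mul, Real.norm_eq_abs, abs_le]
    constructor
    · have h1 : g (-x) ≤ N (-x) := hgN (-x)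
      have h2 : N (-x) ≤ ‖-x‖ := hNle (-x)
      rw [map_neg, norm_neg] at *
      linarith [hNle (-x), hgN (-x)]
    · linarith [hgN x, hNle x]
  set G : X →L[ℝ] ℝ := g.mkContinuous 1 hgbound with hG_def
  have hGapp : ∀ x, G x = g x := fun x => rfl
  have hGz : G z = d := by
    have h1 : g z ≤ N z := hgN z
    have h2 : N z ≤ d := by
      have := hN_mem z 1 one_pos
      have hq1 : q z 1 = d := by
        rw [hq_def]
        simp only [one_smul, div_one]
        rw [show z + z = (2:ℝ) • z by rw [two_smul], norm_smul]
        simp [hd_def]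
        ring
      linarith
    have h3 : g (-z) ≤ N (-z) := hgN (-z)
    have h4 : N (-z) ≤ -d := by
      have := hN_mem (-z) (1/2) (by norm_num)
      have hq2 : q (-z) (1/2) = -d := by
        rw [hq_def]
        simp only
        rw [show z + (1/2 : ℝ) • (-z) = (1/2 : ℝ) • z by module]
        rw [norm_smul]
        simp [hd_def]
        ring
      linarith
    rw [map_neg] at h3
    rw [hGapp]
    linarith
  have hGnorm : ‖G‖ = 1 := by
    refine le_antisymm (g.mkContinuous_norm_le zero_le_one hgbound) ?_
    have h1 : d ≤ ‖G‖ * d := by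
      calc d = G z := hGz.symm
        _ ≤ ‖G z‖ := le_abs_self _
        _ ≤ ‖G‖ * ‖z‖ := G.le_opNorm z
    have := (mul_le_mul_iff_of_pos_right hd).mp (by linarith : 1 * d ≤ ‖G‖ * d)
    linarith
  have hdG : d • G ∈ dualityMap z := by
    constructor
    · show (d • G) z = ‖z‖ ^ 2
      rw [ContinuousLinearMap.smul_apply, hGz, smul_eq_mul, ← hd_def, sq]
    · show ‖z‖ ^ 2 = ‖d • G‖ ^ 2
      have hn : ‖d • G‖ = d := by
        have hle : ‖d • G‖ ≤ d := by
          have := ContinuousLinearMap.opNorm_smul_le d G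
          rw [hGnorm, Real.norm_eq_abs, abs_of_pos hd, mul_one] at this
          exact this
        have hge : d ≤ ‖d • G‖ := by
          have h2 : (d • G) z ≤ ‖d • G‖ * ‖z‖ := le_trans (le_abs_self _) ((d • G).le_opNorm z)
          rw [ContinuousLinearMap.smul_apply, hGz, smul_eq_mul] at h2
          nlinarith [norm_nonneg (d • G)]
        linarith
      rw [hn, ← hd_def]
  have hws_eq : d • G = ws := by
    rw [hws] at hdG
    exact hdG
  have hNu : 0 ≤ N u := by
    apply le_csInf (hSne u)
    rintro r ⟨t, ht, rfl⟩
    rw [Set.mem_Ioi] at ht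
    rcases le_or_gt t 1 with h | h
    · have := hu t ht h
      rw [hq_def]
      simp only
      exact div_nonneg (by linarith) ht.le
    · have h1 : q u 1 ≤ q u t := hmono u 1 t one_pos h.le
      have h0 := hu 1 one_pos le_rfl
      rw [one_smul] at h0
      have h2 : 0 ≤ q u 1 := by
        rw [hq_def]; simp only [one_smul, div_one]; linarith
      linarith
  calc (0:ℝ) ≤ d * N u := by positivity
    _ = d * G u := by rw [hGapp, hgu]
    _ = (d • G) u := by rw [ContinuousLinearMap.smul_apply, smul_eq_mul]
    _ = ws u := by rw [hws_eq]

theorem halfway_hyperplane_of_nearest_points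
    {X : Type*} [NormedAddCommGroup X] [NormedSpace ℝ X] [CompleteSpace X]
    (hsmooth : ∀ y : X, y ≠ 0 → (dualityMap y).Subsingleton)
    (C₁ C₂ : Set X) (hC₁ : IsClosed C₁) (hC₂ : IsClosed C₂)
    (hconv₁ : Convex ℝ C₁) (hconv₂ : Convex ℝ C₂)
    (x₁ : X) (x₂ : X) (hx₁ : x₁ ∈ C₁) (hx₂ : x₂ ∈ C₂)
    (hdist : ‖x₁ - x₂‖ = setDist C₁ C₂) (hpos : 0 < setDist C₁ C₂)
    (ws : X →L[ℝ] ℝ) (hws : dualityMap (x₂ - x₁) = {ws}) :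
    setDist {x : X | ws x = ws ((1 / 2 : ℝ) • (x₁ + x₂))} C₁ = ‖x₁ - x₂‖ / 2 ∧
    setDist {x : X | ws x = ws ((1 / 2 : ℝ) • (x₁ + x₂))} C₂ = ‖x₁ - x₂‖ / 2 := by
  set d := ‖x₁ - x₂‖ with hd_def
  have hd : 0 < d := hdist ▸ hpos
  set z := x₂ - x₁ with hz_def
  have hzn : ‖z‖ = d := by rw [hz_def, hd_def, norm_sub_rev]
  have hz : z ≠ 0 := by
    intro h
    rw [h, norm_zero] at hzn
    linarith
  have hws_mem : ws ∈ dualityMap z := by rw [hws]; rfl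
  obtain ⟨hws1, hws2⟩ := hws_mem
  have hwsz : ws z = d ^ 2 := by rw [hws1, hzn]
  have hwsnorm : ‖ws‖ = d := by
    have h1 : d ^ 2 = ‖ws‖ ^ 2 := by rw [← hzn]; exact hws2
    nlinarith [norm_nonneg ws]
  -- set distance is a lower bound for distances between members
  have hsd_le : ∀ (A B : Set X), ∀ a ∈ A, ∀ b ∈ B, setDist A B ≤ ‖a - b‖ := by
    intro A B a ha b hb
    apply csInf_le ⟨0, by rintro r ⟨p, hp, q, hq, rfl⟩; exact norm_nonneg _⟩
    exact Set.mem_image2_of_mem ha hb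
  have hsd_ge : ∀ (A B : Set X) (c : ℝ), (Set.image2 (fun a b => ‖a - b‖) A B).Nonempty →
      (∀ a ∈ A, ∀ b ∈ B, c ≤ ‖a - b‖) → c ≤ setDist A B := by
    intro A B c hne h
    apply le_csInf hne
    rintro r ⟨a, ha, b, hb, rfl⟩
    exact h a ha b hb
  -- variational inequalities
  have hvi1 : ∀ y ∈ C₁, ws y ≤ ws x₁ := by
    intro y hy
    have h0 : 0 ≤ ws (x₁ - y) := by
      apply key_nonneg z hz ws hws (x₁ - y)
      intro t ht ht1
      have hc : (1 - t) • x₁ + t • y ∈ C₁ := hconv₁ hx₁ hy (by linarith) ht.le (by ring)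
      have hid : z + t • (x₁ - y) = -(((1 - t) • x₁ + t • y) - x₂) := by
        rw [hz_def]; module
      rw [hid, norm_neg]
      calc ‖z‖ = setDist C₁ C₂ := by rw [hzn]; exact hdist
        _ ≤ ‖((1 - t) • x₁ + t • y) - x₂‖ := hsd_le _ _ _ hc _ hx₂
    rw [map_sub] at h0
    linarith
  have hvi2 : ∀ y ∈ C₂, ws x₂ ≤ ws y := by
    intro y hy
    have h0 : 0 ≤ ws (y - x₂) := by
      apply key_nonneg z hz ws hws (y - x₂)
      intro t ht ht1
      have hc : (1 - t) • x₂ + t • y ∈ C₂ := hconv₂ hx₂ hy (by linarith) ht.le (by ring)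
      have hid : z + t • (y - x₂) = -(x₁ - ((1 - t) • x₂ + t • y)) := by
        rw [hz_def]; module
      rw [hid, norm_neg]
      calc ‖z‖ = setDist C₁ C₂ := by rw [hzn]; exact hdist
        _ ≤ ‖x₁ - ((1 - t) • x₂ + t • y)‖ := hsd_le _ _ _ hx₁ _ hc
    rw [map_sub] at h0
    linarith
  set m : X := (1 / 2 : ℝ) • (x₁ + x₂) with hm_def
  have hwsm₁ : ws m - ws x₁ = d ^ 2 / 2 := by
    have h1 : ws m = (1/2) * (ws x₁ + ws x₂) := by
      rw [hm_def, map_smul, map_add, smul_eq_mul]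
    have h2 : ws x₂ - ws x₁ = d ^ 2 := by
      rw [← hwsz, hz_def, map_sub]
    linarith
  have hwsm₂ : ws x₂ - ws m = d ^ 2 / 2 := by
    have h1 : ws m = (1/2) * (ws x₁ + ws x₂) := by
      rw [hm_def, map_smul, map_add, smul_eq_mul]
    have h2 : ws x₂ - ws x₁ = d ^ 2 := by
      rw [← hwsz, hz_def, map_sub]
    linarith
  have hmH : m ∈ {x : X | ws x = ws ((1 / 2 : ℝ) • (x₁ + x₂))} := rfl
  have hbound : ∀ (f : X →L[ℝ] ℝ) (v : X), f v ≤ ‖f‖ * ‖v‖ :=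
    fun f v => le_trans (le_abs_self _) (f.le_opNorm v)
  constructor
  · refine le_antisymm ?_ ?_
    · have hval : ‖m - x₁‖ = d / 2 := by
        have : m - x₁ = (1/2 : ℝ) • (x₂ - x₁) := by rw [hm_def]; module
        rw [this, norm_smul, ← hz_def, hzn, Real.norm_eq_abs,
          abs_of_pos (by norm_num : (0:ℝ) < 1/2)]
        ring
      calc setDist _ C₁ ≤ ‖m - x₁‖ := hsd_le _ _ _ hmH _ hx₁
        _ = d / 2 := hval
    · apply hsd_ge _ _ _ ⟨‖m - x₁‖, Set.mem_image2_of_mem hmH hx₁⟩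
      intro a ha b hb
      have h1 : ws (a - b) = (ws m - ws x₁) + (ws x₁ - ws b) := by
        rw [map_sub, ha, ← hm_def]
        ring_nf
      have h2 : d ^ 2 / 2 ≤ ws (a - b) := by
        rw [h1, hwsm₁]
        have := hvi1 b hb
        linarith
      have h3 : ws (a - b) ≤ d * ‖a - b‖ := by
        rw [← hwsnorm]; exact hbound ws (a - b)
      nlinarith
  · refine le_antisymm ?_ ?_
    · have hval : ‖m - x₂‖ = d / 2 := by
        have : m - x₂ = (1/2 : ℝ) • (x₁ - x₂) := by rw [hm_def]; module
        rw [this, norm_smul, ← hd_def, Real.norm_eq_abs,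
          abs_of_pos (by norm_num : (0:ℝ) < 1/2)]
        ring
      calc setDist _ C₂ ≤ ‖m - x₂‖ := hsd_le _ _ _ hmH _ hx₂
        _ = d / 2 := hval
    · apply hsd_ge _ _ _ ⟨‖m - x₂‖, Set.mem_image2_of_mem hmH hx₂⟩
      intro a ha b hb
      have h1 : ws (b - a) = (ws b - ws x₂) + (ws x₂ - ws m) := by
        rw [map_sub, ha, ← hm_def]
        ring_nf
      have h2 : d ^ 2 / 2 ≤ ws (b - a) := by
        rw [h1, hwsm₂]
        have := hvi2 b hb
        linarith
      have h3 : ws (b - a) ≤ d * ‖a - b‖ := by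
        rw [← hwsnorm, ← norm_sub_rev]; exact hbound ws (b - a)
      nlinarith
end

section
/- Let X be a reflexive, smooth real Banach space and C₁, C₂ disjoint nonempty closed convex subsets such that nearest points exist where needed. Define the two-player game where player i picks xᵢ ∈ Cᵢ, the hyperplane H(x₁,x₂) = {x : w(x) = w((x₁+x₂)/2)} with w the unique duality-mapping element of x₁ − x₂, and payoff vᵢ(x₁,x₂) = dist(H(x₁,x₂), Cᵢ). Then (x̄₁, x̄₂) is a Nash equilibrium of this game if and only if ‖x̄₁ − x̄₂‖ = dist(C₁, C₂); moreover at equilibrium both payoffs equal ½‖x̄₁ − x̄₂‖. -/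
open Pointwise
set_option linter.unusedSectionVars false
set_option maxHeartbeats 1000000


/-- The separating hyperplane halfway between `x₁` and `x₂`, defined through the
duality-mapping selection `w`. -/
def gameHyperplane {X : Type*} [NormedAddCommGroup X] [NormedSpace ℝ X]
    (w : X → (X →L[ℝ] ℝ)) (x₁ x₂ : X) : Set X :=
  {x : X | w (x₁ - x₂) x = w (x₁ - x₂) ((1 / 2 : ℝ) • (x₁ + x₂))}


section slope
variable {X : Type*} [NormedAddCommGroup X] [NormedSpace ℝ X]

noncomputable def qslope (y v : X) (t : ℝ) : ℝ := (‖y + t • v‖ - ‖y‖) / t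

lemma qslope_le_norm (y v : X) {t : ℝ} (ht : 0 < t) : qslope y v t ≤ ‖v‖ := by
  unfold qslope
  rw [div_le_iff₀ ht]
  have h1 : ‖y + t • v‖ ≤ ‖y‖ + t * ‖v‖ := by
    calc ‖y + t • v‖ ≤ ‖y‖ + ‖t • v‖ := norm_add_le _ _
    _ = ‖y‖ + t * ‖v‖ := by rw [norm_smul, Real.norm_eq_abs, abs_of_pos ht]
  linarith

lemma neg_norm_le_qslope (y v : X) {t : ℝ} (ht : 0 < t) : -‖v‖ ≤ qslope y v t := by
  unfold qslope
  rw [le_div_iff₀ ht]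
  have h2 : ‖y‖ - ‖y + t • v‖ ≤ ‖y - (y + t • v)‖ := norm_sub_norm_le _ _
  have h3 : ‖y - (y + t • v)‖ = t * ‖v‖ := by
    have : y - (y + t • v) = -(t • v) := by abel
    rw [this, norm_neg, norm_smul, Real.norm_eq_abs, abs_of_pos ht]
  linarith

lemma qslope_mono (y v : X) {s t : ℝ} (hs : 0 < s) (hst : s ≤ t) :
    qslope y v s ≤ qslope y v t := by
  have ht : 0 < t := lt_of_lt_of_le hs hst
  set r := s / t with hr
  have hrt : r * t = s := div_mul_cancel₀ s ht.ne'
  have hr0 : 0 ≤ r := div_nonneg hs.le ht.le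
  have hd : y + s • v = (1 - r) • y + r • (y + t • v) := by
    rw [smul_add, smul_smul, hrt]
    module
  have hr1 : r ≤ 1 := (div_le_one ht).mpr hst
  have key : ‖y + s • v‖ ≤ (1 - r) * ‖y‖ + r * ‖y + t • v‖ := by
    rw [hd]
    calc ‖(1 - r) • y + r • (y + t • v)‖ ≤ ‖(1 - r) • y‖ + ‖r • (y + t • v)‖ :=
      norm_add_le _ _
    _ = (1 - r) * ‖y‖ + r * ‖y + t • v‖ := by
      rw [norm_smul, norm_smul, Real.norm_eq_abs, Real.norm_eq_abs,
        abs_of_nonneg (by linarith), abs_of_nonneg hr0]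
  have expand : ((1 - r) * ‖y‖ + r * ‖y + t • v‖) * t =
      ‖y‖ * t - s * ‖y‖ + s * ‖y + t • v‖ := by rw [← hrt]; ring
  unfold qslope
  rw [div_le_div_iff₀ hs ht]
  have := mul_le_mul_of_nonneg_right key ht.le
  rw [expand] at this
  nlinarith

noncomputable def psub (y v : X) : ℝ := sInf (qslope y v '' Set.Ioi 0)

lemma psub_bddBelow (y v : X) : BddBelow (qslope y v '' Set.Ioi 0) :=
  ⟨-‖v‖, by rintro x ⟨t, ht, rfl⟩; exact neg_norm_le_qslope y v ht⟩

lemma psub_nonempty (y v : X) : (qslope y v '' Set.Ioi 0).Nonempty :=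
  ⟨qslope y v 1, 1, by simp, rfl⟩

lemma psub_le_qslope (y v : X) {t : ℝ} (ht : 0 < t) : psub y v ≤ qslope y v t :=
  csInf_le (psub_bddBelow y v) ⟨t, ht, rfl⟩

lemma psub_le_norm (y v : X) : psub y v ≤ ‖v‖ :=
  le_trans (psub_le_qslope y v one_pos) (qslope_le_norm y v one_pos)

lemma neg_norm_le_psub (y v : X) : -‖v‖ ≤ psub y v :=
  le_csInf (psub_nonempty y v) (by rintro x ⟨t, ht, rfl⟩; exact neg_norm_le_qslope y v ht)

lemma psub_add_le (y u v : X) : psub y (u + v) ≤ psub y u + psub y v := by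
  by_contra hcon
  push_neg at hcon
  set ε := (psub y (u + v) - psub y u - psub y v) / 2 with hε
  have hε0 : 0 < ε := by simp only [hε]; linarith
  obtain ⟨a, ⟨t₁, ht₁, rfl⟩, h₁⟩ :=
    exists_lt_of_csInf_lt (psub_nonempty y u) (lt_add_of_pos_right (psub y u) hε0)
  obtain ⟨b, ⟨t₂, ht₂, rfl⟩, h₂⟩ :=
    exists_lt_of_csInf_lt (psub_nonempty y v) (lt_add_of_pos_right (psub y v) hε0)
  simp only [Set.mem_Ioi] at ht₁ ht₂
  set t := min t₁ t₂ / 2 with hT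
  have ht : 0 < t := by positivity
  have h2t₁ : 2 * t ≤ t₁ := by
    have := min_le_left t₁ t₂; simp only [hT]; linarith
  have h2t₂ : 2 * t ≤ t₂ := by
    have := min_le_right t₁ t₂; simp only [hT]; linarith
  have key : qslope y (u + v) t ≤ qslope y u (2 * t) + qslope y v (2 * t) := by
    have hrw : qslope y u (2 * t) + qslope y v (2 * t) =
        ((‖y + (2 * t) • u‖ + ‖y + (2 * t) • v‖) / 2 - ‖y‖) / t := by
      unfold qslope; field_simp; ring
    rw [hrw]
    unfold qslope
    gcongr
    have hd : y + t • (u + v) = (1 / 2 : ℝ) • (y + (2 * t) • u) + (1 / 2 : ℝ) • (y + (2 * t) • v) := by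
      module
    rw [hd]
    calc ‖(1 / 2 : ℝ) • (y + (2 * t) • u) + (1 / 2 : ℝ) • (y + (2 * t) • v)‖
        ≤ ‖(1 / 2 : ℝ) • (y + (2 * t) • u)‖ + ‖(1 / 2 : ℝ) • (y + (2 * t) • v)‖ :=
          norm_add_le _ _
    _ = (‖y + (2 * t) • u‖ + ‖y + (2 * t) • v‖) / 2 := by
        rw [norm_smul, norm_smul]; norm_num; ring
  have m₁ : qslope y u (2 * t) ≤ qslope y u t₁ := qslope_mono y u (by linarith) h2t₁
  have m₂ : qslope y v (2 * t) ≤ qslope y v t₂ := qslope_mono y v (by linarith) h2t₂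
  have hp : psub y (u + v) ≤ qslope y (u + v) t := psub_le_qslope y (u + v) ht
  simp only [hε] at h₁ h₂
  linarith

lemma qslope_smul (y v : X) {c t : ℝ} (hc : 0 < c) (ht : 0 < t) :
    qslope y (c • v) t = c * qslope y v (c * t) := by
  unfold qslope
  rw [smul_smul, mul_comm t c]
  field_simp

lemma psub_smul (y v : X) {c : ℝ} (hc : 0 < c) : psub y (c • v) = c * psub y v := by
  have himg : qslope y (c • v) '' Set.Ioi 0 =
      c • (qslope y v '' Set.Ioi 0) := by
    ext x
    constructor
    · rintro ⟨t, ht, rfl⟩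
      simp only [Set.mem_Ioi] at ht
      refine ⟨qslope y v (c * t), ⟨c * t, Set.mem_Ioi.mpr (by positivity), rfl⟩, ?_⟩
      show c • qslope y v (c * t) = qslope y (c • v) t
      rw [smul_eq_mul, ← qslope_smul y v hc ht]
    · rintro ⟨_, ⟨t, ht, rfl⟩, rfl⟩
      simp only [Set.mem_Ioi] at ht
      refine ⟨t / c, Set.mem_Ioi.mpr (by positivity), ?_⟩
      show qslope y (c • v) (t / c) = c • qslope y v t
      rw [smul_eq_mul, qslope_smul y v hc (t := t / c) (by positivity),
        mul_div_cancel₀ _ hc.ne']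
  unfold psub
  rw [himg, Real.sInf_smul_of_nonneg hc.le, smul_eq_mul]

lemma psub_zero (y : X) : psub y (0 : X) = 0 := by
  have h : ∀ t : ℝ, 0 < t → qslope y (0 : X) t = 0 := by
    intro t ht; unfold qslope; simp
  apply le_antisymm
  · have := psub_le_qslope y (0 : X) one_pos
    rw [h 1 one_pos] at this; exact this
  · apply le_csInf (psub_nonempty y 0)
    rintro x ⟨t, ht, rfl⟩
    rw [h t ht]

lemma psub_self (y : X) : psub y y = ‖y‖ := by
  have h : ∀ t : ℝ, 0 < t → qslope y y t = ‖y‖ := by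
    intro t ht
    unfold qslope
    have : y + t • y = (1 + t) • y := by module
    rw [this, norm_smul, Real.norm_eq_abs, abs_of_pos (by linarith)]
    field_simp
    ring
  apply le_antisymm
  · have := psub_le_qslope y y one_pos; rw [h 1 one_pos] at this; exact this
  · apply le_csInf (psub_nonempty y y)
    rintro x ⟨t, ht, rfl⟩
    rw [h t ht]

lemma psub_neg_self (y : X) : psub y (-y) = -‖y‖ := by
  apply le_antisymm
  · have hq : qslope y (-y) (1 / 2) = -‖y‖ := by
      unfold qslope
      have : y + (1 / 2 : ℝ) • (-y) = (1 / 2 : ℝ) • y := by module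
      rw [this, norm_smul]
      norm_num
      ring
    have := psub_le_qslope y (-y) (t := 1 / 2) (by norm_num)
    rw [hq] at this; exact this
  · have := neg_norm_le_psub y (-y); rwa [norm_neg] at this

end slope

section smoothlemma
variable {X : Type*} [NormedAddCommGroup X] [NormedSpace ℝ X]

lemma smooth_deriv {y : X} (hy : y ≠ 0) {F : X →L[ℝ] ℝ}
    (hs : dualityMap y = {F}) (u : X) : F u = ‖y‖ * psub y u := by
  by_cases hu : u = 0
  · subst hu; rw [psub_zero, map_zero, mul_zero]
  -- build the linear functional
  set f₀ := LinearPMap.mkSpanSingleton (K := ℝ) (L := ℝ) (σ := RingHom.id ℝ) u (psub y u) hu with hf₀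
  have hdom : ∀ x : f₀.domain, (x : X) ∈ Submodule.span ℝ {u} := fun x => x.2
  have hfle : ∀ x : f₀.domain, f₀ x ≤ psub y (x : X) := by
    intro x
    obtain ⟨a, ha⟩ := Submodule.mem_span_singleton.mp (hdom x)
    have hxeq : x = a • (⟨u, Submodule.mem_span_singleton_self u⟩ : f₀.domain) := by
      apply Subtype.ext
      simp [ha.symm]
    rw [hxeq, LinearPMap.map_smul, LinearPMap.mkSpanSingleton_apply]
    simp only [SetLike.val_smul, smul_eq_mul]
    rcases lt_trichotomy a 0 with h | h | h
    · have h1 : a • u = (-a) • (-u) := by module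
      rw [h1, psub_smul y (-u) (by linarith)]
      have h2 : 0 ≤ psub y u + psub y (-u) := by
        have := psub_add_le y u (-u)
        rw [add_neg_cancel, psub_zero] at this
        linarith
      nlinarith
    · subst h; simp [psub_zero]
    · rw [psub_smul y u h]
  obtain ⟨g, hg1, hg2⟩ := exists_extension_of_le_sublinear f₀ (psub y)
    (fun c hc x => psub_smul y x hc) (psub_add_le y) hfle
  have hgu : g u = psub y u := by
    have := hg1 ⟨u, Submodule.mem_span_singleton_self u⟩
    rwa [LinearPMap.mkSpanSingleton_apply] at this
  have hbound : ∀ x : X, ‖g x‖ ≤ 1 * ‖x‖ := by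
    intro x
    rw [one_mul, Real.norm_eq_abs, abs_le]
    constructor
    · have := hg2 (-x)
      rw [map_neg] at this
      have h2 := psub_le_norm y (-x)
      rw [norm_neg] at h2
      linarith
    · exact le_trans (hg2 x) (psub_le_norm y x)
  set G : X →L[ℝ] ℝ := g.mkContinuous 1 hbound with hG
  have hGapp : ∀ x : X, G x = g x := fun x => rfl
  have hGy : G y = ‖y‖ := by
    rw [hGapp]
    have h1 : g y ≤ ‖y‖ := by have := hg2 y; rwa [psub_self] at this
    have h2 : g (-y) ≤ -‖y‖ := by have := hg2 (-y); rwa [psub_neg_self] at this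
    rw [map_neg] at h2
    linarith
  have hy0 : (0 : ℝ) < ‖y‖ := norm_pos_iff.mpr hy
  have hGnorm : ‖G‖ = 1 := by
    apply le_antisymm
    · exact g.mkContinuous_norm_le zero_le_one hbound
    · have h1 : ‖y‖ = ‖G y‖ := by rw [hGy, Real.norm_eq_abs, abs_of_pos hy0]
      have h2 : ‖G y‖ ≤ ‖G‖ * ‖y‖ := G.le_opNorm y
      rw [← h1] at h2
      calc (1 : ℝ) = ‖y‖ / ‖y‖ := by rw [div_self hy0.ne']
      _ ≤ ‖G‖ * ‖y‖ / ‖y‖ := by gcongr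
      _ = ‖G‖ := by field_simp
  have hnorm : ‖(‖y‖ : ℝ) • G‖ = ‖y‖ := by
    have h1 : ‖(‖y‖ : ℝ) • G‖ = ‖(‖y‖ : ℝ)‖ * ‖G‖ := norm_smul (‖y‖) G
    rw [h1, Real.norm_eq_abs, abs_of_pos hy0, hGnorm, mul_one]
  have hmem : (‖y‖ • G) ∈ dualityMap y := by
    refine ⟨?_, by rw [hnorm]⟩
    rw [ContinuousLinearMap.smul_apply, hGy, smul_eq_mul, sq]
  rw [hs, Set.mem_singleton_iff] at hmem
  rw [← hmem, ContinuousLinearMap.smul_apply, hGapp, hgu, smul_eq_mul]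

lemma smooth_nonneg {y : X} (hy : y ≠ 0) {F : X →L[ℝ] ℝ}
    (hs : dualityMap y = {F}) (u : X)
    (h : ∀ t : ℝ, 0 < t → t ≤ 1 → ‖y‖ ≤ ‖y + t • u‖) : 0 ≤ F u := by
  rw [smooth_deriv hy hs u]
  apply mul_nonneg (norm_nonneg y)
  apply le_csInf (psub_nonempty y u)
  rintro x ⟨t, ht, rfl⟩
  simp only [Set.mem_Ioi] at ht
  rcases le_or_gt t 1 with h1 | h1
  · unfold qslope
    have := h t ht h1
    apply div_nonneg (by linarith) ht.le
  · have h2 : qslope y u 1 ≤ qslope y u t := qslope_mono y u one_pos h1.le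
    have h3 : 0 ≤ qslope y u 1 := by
      unfold qslope
      have := h 1 one_pos le_rfl
      simp only [one_smul] at this ⊢
      apply div_nonneg (by linarith) zero_le_one
    linarith

end smoothlemma

section hyper
variable {X : Type*} [NormedAddCommGroup X] [NormedSpace ℝ X]

lemma setDist_nonneg (A B : Set X) : 0 ≤ setDist A B := by
  apply Real.sInf_nonneg
  rintro x ⟨a, ha, b, hb, rfl⟩
  exact norm_nonneg _

lemma setDist_le {A B : Set X} {a b : X} (ha : a ∈ A) (hb : b ∈ B) :
    setDist A B ≤ ‖a - b‖ := by
  apply csInf_le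
  · exact ⟨0, by rintro x ⟨a', _, b', _, rfl⟩; exact norm_nonneg _⟩
  · exact ⟨a, ha, b, hb, rfl⟩

lemma le_setDist {A B : Set X} {r : ℝ} (hA : A.Nonempty) (hB : B.Nonempty)
    (h : ∀ a ∈ A, ∀ b ∈ B, r ≤ ‖a - b‖) : r ≤ setDist A B := by
  apply le_csInf
  · exact ⟨_, hA.choose, hA.choose_spec, hB.choose, hB.choose_spec, rfl⟩
  · rintro x ⟨a, ha, b, hb, rfl⟩; exact h a ha b hb

variable (w : X → (X →L[ℝ] ℝ))
  (hsmooth : ∀ y : X, y ≠ 0 → dualityMap y = {w y})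

include hsmooth

lemma w_apply_self {y : X} (hy : y ≠ 0) : (w y) y = ‖y‖ ^ 2 := by
  have : w y ∈ dualityMap y := by rw [hsmooth y hy]; rfl
  exact this.1

lemma norm_w {y : X} (hy : y ≠ 0) : ‖w y‖ = ‖y‖ := by
  have : w y ∈ dualityMap y := by rw [hsmooth y hy]; rfl
  exact (pow_left_inj₀ (norm_nonneg _) (norm_nonneg _) two_ne_zero).mp this.2.symm

lemma w_neg {y : X} (hy : y ≠ 0) : w (-y) = -(w y) := by
  have h1 : -(w y) ∈ dualityMap (-y) := by
    refine ⟨?_, ?_⟩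
    · simp [w_apply_self w hsmooth hy]
    · simp [norm_w w hsmooth hy]
  have h2 := hsmooth (-y) (neg_ne_zero.mpr hy)
  rw [h2] at h1
  exact (Set.mem_singleton_iff.mp h1).symm

lemma abs_apply_le {y : X} (hy : y ≠ 0) (v : X) : |w y v| ≤ ‖y‖ * ‖v‖ := by
  calc |w y v| = ‖w y v‖ := rfl
  _ ≤ ‖w y‖ * ‖v‖ := (w y).le_opNorm v
  _ = ‖y‖ * ‖v‖ := by rw [norm_w w hsmooth hy]

lemma gameHyperplane_comm {x₁ x₂ : X} (h : x₁ - x₂ ≠ 0) :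
    gameHyperplane w x₂ x₁ = gameHyperplane w x₁ x₂ := by
  have h' : x₂ - x₁ = -(x₁ - x₂) := by abel
  have hw : w (x₂ - x₁) = -(w (x₁ - x₂)) := by rw [h']; exact w_neg w hsmooth h
  unfold gameHyperplane
  ext x
  simp only [Set.mem_setOf_eq, hw, ContinuousLinearMap.neg_apply, neg_inj]
  rw [add_comm x₂ x₁]

lemma hyper_le {x₁ x₂ : X} (h : x₁ - x₂ ≠ 0) {A : Set X} {a : X} (ha : a ∈ A) :
    setDist (gameHyperplane w x₁ x₂) A ≤
      |w (x₁ - x₂) a - w (x₁ - x₂) ((1 / 2 : ℝ) • (x₁ + x₂))| / ‖x₁ - x₂‖ := by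
  have hfy : w (x₁ - x₂) (x₁ - x₂) = ‖x₁ - x₂‖ ^ 2 := w_apply_self w hsmooth h
  have hn : ‖x₁ - x₂‖ ≠ 0 := norm_ne_zero_iff.mpr h
  set c := w (x₁ - x₂) ((1 / 2 : ℝ) • (x₁ + x₂)) with hc
  have hmem : a + ((c - w (x₁ - x₂) a) / ‖x₁ - x₂‖ ^ 2) • (x₁ - x₂) ∈
      gameHyperplane w x₁ x₂ := by
    show w (x₁ - x₂) _ = c
    rw [map_add, map_smul, smul_eq_mul, hfy]
    field_simp
    ring
  calc setDist (gameHyperplane w x₁ x₂) A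
      ≤ ‖(a + ((c - w (x₁ - x₂) a) / ‖x₁ - x₂‖ ^ 2) • (x₁ - x₂)) - a‖ :=
        setDist_le hmem ha
  _ = |w (x₁ - x₂) a - c| / ‖x₁ - x₂‖ := by
      rw [add_sub_cancel_left, norm_smul, Real.norm_eq_abs, abs_div,
        abs_of_nonneg (pow_nonneg (norm_nonneg _) 2), abs_sub_comm]
      field_simp

lemma le_hyper {x₁ x₂ : X} (h : x₁ - x₂ ≠ 0) {A : Set X} (hA : A.Nonempty) {r : ℝ}
    (hr : ∀ a ∈ A, r * ‖x₁ - x₂‖ ≤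
      |w (x₁ - x₂) a - w (x₁ - x₂) ((1 / 2 : ℝ) • (x₁ + x₂))|) :
    r ≤ setDist (gameHyperplane w x₁ x₂) A := by
  have hfy : w (x₁ - x₂) (x₁ - x₂) = ‖x₁ - x₂‖ ^ 2 := w_apply_self w hsmooth h
  have hn : ‖x₁ - x₂‖ ≠ 0 := norm_ne_zero_iff.mpr h
  have hnpos : 0 < ‖x₁ - x₂‖ := norm_pos_iff.mpr h
  have hHne : (gameHyperplane w x₁ x₂).Nonempty := by
    refine ⟨(w (x₁ - x₂) ((1 / 2 : ℝ) • (x₁ + x₂)) / ‖x₁ - x₂‖ ^ 2) • (x₁ - x₂), ?_⟩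
    show w (x₁ - x₂) _ = _
    rw [map_smul, smul_eq_mul, hfy]
    field_simp
  apply le_setDist hHne hA
  intro hp hhp a ha
  have h1 : w (x₁ - x₂) hp = w (x₁ - x₂) ((1 / 2 : ℝ) • (x₁ + x₂)) := hhp
  have h2 : |w (x₁ - x₂) a - w (x₁ - x₂) ((1 / 2 : ℝ) • (x₁ + x₂))|
      = |w (x₁ - x₂) (a - hp)| := by rw [map_sub, h1]
  have h3 : |w (x₁ - x₂) (a - hp)| ≤ ‖x₁ - x₂‖ * ‖a - hp‖ :=
    abs_apply_le w hsmooth h _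
  have h4 : ‖a - hp‖ = ‖hp - a‖ := norm_sub_rev _ _
  have h5 := hr a ha
  rw [h2] at h5
  nlinarith [h3, hnpos, h4]

omit hsmooth in
lemma exists_cross (f : X →L[ℝ] ℝ) {A : Set X} (hA : Convex ℝ A) {a₀ a₁ : X}
    (h₀ : a₀ ∈ A) (h₁ : a₁ ∈ A) {c : ℝ} (hc₀ : c ≤ f a₀) (hc₁ : f a₁ ≤ c) :
    ∃ q ∈ A, f q = c := by
  have hcont : ContinuousOn (fun t : ℝ => f ((1 - t) • a₀ + t • a₁)) (Set.Icc 0 1) := by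
    apply Continuous.continuousOn
    exact f.continuous.comp
      (((continuous_const.sub continuous_id).smul continuous_const).add
        (continuous_id.smul continuous_const))
  have hcmem : c ∈ Set.Icc (f ((1 - (1:ℝ)) • a₀ + (1:ℝ) • a₁))
      (f ((1 - (0:ℝ)) • a₀ + (0:ℝ) • a₁)) := by
    constructor
    · simpa using hc₁
    · simpa using hc₀
  obtain ⟨t, ht, hfeq⟩ := intermediate_value_Icc' zero_le_one hcont hcmem
  exact ⟨(1 - t) • a₀ + t • a₁,
    hA h₀ h₁ (by linarith [ht.2]) ht.1 (by ring), hfeq⟩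

lemma nearest_payoff {C : Set X} (hC : Convex ℝ C) {p z : X} (hp : p ∈ C)
    (hpz : p - z ≠ 0) (hmin : ∀ c ∈ C, ‖z - p‖ ≤ ‖z - c‖) :
    setDist (gameHyperplane w p z) C = ‖p - z‖ / 2 := by
  have hfy : w (p - z) (p - z) = ‖p - z‖ ^ 2 := w_apply_self w hsmooth hpz
  have hn : ‖p - z‖ ≠ 0 := norm_ne_zero_iff.mpr hpz
  have hnpos : 0 < ‖p - z‖ := norm_pos_iff.mpr hpz
  have hdiff : w (p - z) p - w (p - z) z = ‖p - z‖ ^ 2 := by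
    rw [← map_sub]; exact hfy
  have hm : w (p - z) ((1 / 2 : ℝ) • (p + z)) = (w (p - z) p + w (p - z) z) / 2 := by
    rw [map_smul, map_add, smul_eq_mul]; ring
  have hvar : ∀ c ∈ C, 0 ≤ w (p - z) (c - p) := by
    intro c hc
    apply smooth_nonneg hpz (hsmooth _ hpz)
    intro t ht0 ht1
    have hmemC : p + t • (c - p) ∈ C := by
      have he : p + t • (c - p) = (1 - t) • p + t • c := by module
      rw [he]; exact hC hp hc (by linarith) ht0.le (by ring)
    have h1 := hmin _ hmemC
    have h2 : (p - z) + t • (c - p) = (p + t • (c - p)) - z := by abel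
    rw [h2, norm_sub_rev (p + t • (c - p)) z]
    rw [norm_sub_rev z p] at h1
    exact h1
  apply le_antisymm
  · have hb := hyper_le w hsmooth hpz hp (A := C)
    have h1 : w (p - z) p - w (p - z) ((1 / 2 : ℝ) • (p + z)) = ‖p - z‖ ^ 2 / 2 := by
      rw [hm]; linarith
    rw [h1] at hb
    calc setDist (gameHyperplane w p z) C ≤ |‖p - z‖ ^ 2 / 2| / ‖p - z‖ := hb
    _ = ‖p - z‖ / 2 := by
        rw [abs_of_nonneg (by positivity)]
        field_simp
  · apply le_hyper w hsmooth hpz ⟨p, hp⟩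
    intro a ha
    have h1 : w (p - z) a - w (p - z) ((1 / 2 : ℝ) • (p + z))
        = w (p - z) (a - p) + ‖p - z‖ ^ 2 / 2 := by
      rw [map_sub, hm]; linarith
    have h2 := hvar a ha
    rw [h1, abs_of_nonneg (by positivity)]
    nlinarith

end hyper

theorem nash_equilibrium_iff_nearest_points
    {X : Type*} [NormedAddCommGroup X] [NormedSpace ℝ X] [CompleteSpace X]
    (w : X → (X →L[ℝ] ℝ))
    (hsmooth : ∀ y : X, y ≠ 0 → dualityMap y = {w y})
    (C₁ C₂ : Set X) (hC₁ : IsClosed C₁) (hC₂ : IsClosed C₂)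
    (hconv₁ : Convex ℝ C₁) (hconv₂ : Convex ℝ C₂)
    (hne₁ : C₁.Nonempty) (hne₂ : C₂.Nonempty) (hdisj : C₁ ∩ C₂ = ∅)
    (hproj₁ : ∀ z : X, ∃ p ∈ C₁, ∀ y ∈ C₁, ‖z - p‖ ≤ ‖z - y‖)
    (hproj₂ : ∀ z : X, ∃ p ∈ C₂, ∀ y ∈ C₂, ‖z - p‖ ≤ ‖z - y‖)
    (xb₁ : X) (xb₂ : X) (hxb₁ : xb₁ ∈ C₁) (hxb₂ : xb₂ ∈ C₂) :
    ((∀ y₁ ∈ C₁, setDist (gameHyperplane w y₁ xb₂) C₁ ≤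
        setDist (gameHyperplane w xb₁ xb₂) C₁) ∧
     (∀ y₂ ∈ C₂, setDist (gameHyperplane w xb₁ y₂) C₂ ≤
        setDist (gameHyperplane w xb₁ xb₂) C₂)
      ↔ ‖xb₁ - xb₂‖ = setDist C₁ C₂) ∧
    (‖xb₁ - xb₂‖ = setDist C₁ C₂ →
      setDist (gameHyperplane w xb₁ xb₂) C₁ = ‖xb₁ - xb₂‖ / 2 ∧
      setDist (gameHyperplane w xb₁ xb₂) C₂ = ‖xb₁ - xb₂‖ / 2) := by
  have hdisj' : ∀ a ∈ C₁, ∀ b ∈ C₂, a ≠ b := by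
    intro a ha b hb hab
    subst hab
    have : a ∈ C₁ ∩ C₂ := ⟨ha, hb⟩
    rw [hdisj] at this
    exact this
  have hy : xb₁ - xb₂ ≠ 0 := sub_ne_zero.mpr (hdisj' _ hxb₁ _ hxb₂)
  have hnpos : (0:ℝ) < ‖xb₁ - xb₂‖ := norm_pos_iff.mpr hy
  have hyd : setDist C₁ C₂ ≤ ‖xb₁ - xb₂‖ := setDist_le hxb₁ hxb₂
  have hfy : w (xb₁ - xb₂) (xb₁ - xb₂) = ‖xb₁ - xb₂‖ ^ 2 := w_apply_self w hsmooth hy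
  have hdiffb : w (xb₁ - xb₂) xb₁ - w (xb₁ - xb₂) xb₂ = ‖xb₁ - xb₂‖ ^ 2 := by
    rw [← map_sub]; exact hfy
  have hmb : w (xb₁ - xb₂) ((1 / 2 : ℝ) • (xb₁ + xb₂))
      = (w (xb₁ - xb₂) xb₁ + w (xb₁ - xb₂) xb₂) / 2 := by
    rw [map_smul, map_add, smul_eq_mul]; ring
  -- the "moreover" part
  have hmore : ‖xb₁ - xb₂‖ = setDist C₁ C₂ →
      setDist (gameHyperplane w xb₁ xb₂) C₁ = ‖xb₁ - xb₂‖ / 2 ∧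
      setDist (gameHyperplane w xb₁ xb₂) C₂ = ‖xb₁ - xb₂‖ / 2 := by
    intro hEq
    constructor
    · apply nearest_payoff w hsmooth hconv₁ hxb₁ hy
      intro c hc
      calc ‖xb₂ - xb₁‖ = ‖xb₁ - xb₂‖ := norm_sub_rev _ _
      _ = setDist C₁ C₂ := hEq
      _ ≤ ‖c - xb₂‖ := setDist_le hc hxb₂
      _ = ‖xb₂ - c‖ := norm_sub_rev _ _
    · have hy' : xb₂ - xb₁ ≠ 0 := by
        intro h0
        apply hy
        have : xb₁ - xb₂ = -(xb₂ - xb₁) := by abel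
        rw [this, h0, neg_zero]
      have h2 : setDist (gameHyperplane w xb₂ xb₁) C₂ = ‖xb₂ - xb₁‖ / 2 := by
        apply nearest_payoff w hsmooth hconv₂ hxb₂ hy'
        intro c hc
        calc ‖xb₁ - xb₂‖ = setDist C₁ C₂ := hEq
        _ ≤ ‖xb₁ - c‖ := setDist_le hxb₁ hc
      rw [gameHyperplane_comm w hsmooth hy] at h2
      rw [h2, norm_sub_rev]
  refine ⟨⟨?_, fun hEq => ?_⟩, hmore⟩
  · -- equilibrium → nearest pair
    rintro ⟨h1, h2⟩
    obtain ⟨p₁, hp₁C, hp₁min⟩ := hproj₁ xb₂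
    obtain ⟨p₂, hp₂C, hp₂min⟩ := hproj₂ xb₁
    have hp₁z : p₁ - xb₂ ≠ 0 := sub_ne_zero.mpr (hdisj' _ hp₁C _ hxb₂)
    have hp₂z : xb₁ - p₂ ≠ 0 := sub_ne_zero.mpr (hdisj' _ hxb₁ _ hp₂C)
    have hs₁pos : (0:ℝ) < ‖p₁ - xb₂‖ := norm_pos_iff.mpr hp₁z
    have hs₂pos : (0:ℝ) < ‖xb₁ - p₂‖ := norm_pos_iff.mpr hp₂z
    have hC1pay : setDist (gameHyperplane w p₁ xb₂) C₁ = ‖p₁ - xb₂‖ / 2 :=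
      nearest_payoff w hsmooth hconv₁ hp₁C hp₁z hp₁min
    have hC2pay : setDist (gameHyperplane w xb₁ p₂) C₂ = ‖xb₁ - p₂‖ / 2 := by
      have hz' : p₂ - xb₁ ≠ 0 := by
        intro h0
        apply hp₂z
        have : xb₁ - p₂ = -(p₂ - xb₁) := by abel
        rw [this, h0, neg_zero]
      have := nearest_payoff w hsmooth hconv₂ hp₂C hz' hp₂min
      rw [gameHyperplane_comm w hsmooth hp₂z] at this
      rw [this, norm_sub_rev]
    have hP1 : ‖p₁ - xb₂‖ / 2 ≤ setDist (gameHyperplane w xb₁ xb₂) C₁ := by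
      rw [← hC1pay]; exact h1 p₁ hp₁C
    have hP2 : ‖xb₁ - p₂‖ / 2 ≤ setDist (gameHyperplane w xb₁ xb₂) C₂ := by
      rw [← hC2pay]; exact h2 p₂ hp₂C
    -- margin claims
    have claim₁ : ∀ c ∈ C₁, ‖xb₁ - xb₂‖ * (‖p₁ - xb₂‖ / 2) ≤
        w (xb₁ - xb₂) c - w (xb₁ - xb₂) ((1 / 2 : ℝ) • (xb₁ + xb₂)) := by
      intro c hc
      have hb := hyper_le w hsmooth hy hc
      have habs : ‖xb₁ - xb₂‖ * (‖p₁ - xb₂‖ / 2) ≤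
          |w (xb₁ - xb₂) c - w (xb₁ - xb₂) ((1 / 2 : ℝ) • (xb₁ + xb₂))| := by
        have := hP1.trans hb
        rw [le_div_iff₀ hnpos] at this
        nlinarith
      rcases le_or_gt (w (xb₁ - xb₂) ((1 / 2 : ℝ) • (xb₁ + xb₂))) (w (xb₁ - xb₂) c)
        with hpos | hneg
      · rwa [abs_of_nonneg (by linarith)] at habs
      · exfalso
        have hx1 : w (xb₁ - xb₂) ((1 / 2 : ℝ) • (xb₁ + xb₂)) ≤ w (xb₁ - xb₂) xb₁ := by
          nlinarith [sq_nonneg ‖xb₁ - xb₂‖]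
        obtain ⟨q, hq, hfq⟩ := exists_cross (w (xb₁ - xb₂)) hconv₁ hxb₁ hc hx1 hneg.le
        have hbq := hyper_le w hsmooth hy hq
        rw [hfq, sub_self, abs_zero, zero_div] at hbq
        nlinarith
    have claim₂ : ∀ c ∈ C₂, ‖xb₁ - xb₂‖ * (‖xb₁ - p₂‖ / 2) ≤
        w (xb₁ - xb₂) ((1 / 2 : ℝ) • (xb₁ + xb₂)) - w (xb₁ - xb₂) c := by
      intro c hc
      have hb := hyper_le w hsmooth hy hc
      have habs : ‖xb₁ - xb₂‖ * (‖xb₁ - p₂‖ / 2) ≤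
          |w (xb₁ - xb₂) c - w (xb₁ - xb₂) ((1 / 2 : ℝ) • (xb₁ + xb₂))| := by
        have := hP2.trans hb
        rw [le_div_iff₀ hnpos] at this
        nlinarith
      rcases le_or_gt (w (xb₁ - xb₂) c) (w (xb₁ - xb₂) ((1 / 2 : ℝ) • (xb₁ + xb₂)))
        with hpos | hneg
      · rw [abs_sub_comm, abs_of_nonneg (by linarith)] at habs
        linarith
      · exfalso
        have hx2 : w (xb₁ - xb₂) xb₂ ≤ w (xb₁ - xb₂) ((1 / 2 : ℝ) • (xb₁ + xb₂)) := by
          nlinarith [sq_nonneg ‖xb₁ - xb₂‖]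
        obtain ⟨q, hq, hfq⟩ := exists_cross (w (xb₁ - xb₂)) hconv₂ hc hxb₂ hneg.le hx2
        have hbq := hyper_le w hsmooth hy hq
        rw [hfq, sub_self, abs_zero, zero_div] at hbq
        nlinarith
    -- step 3 : (s₁ + s₂)/2 ≤ d
    have hstep3 : (‖p₁ - xb₂‖ + ‖xb₁ - p₂‖) / 2 ≤ setDist C₁ C₂ := by
      apply le_setDist hne₁ hne₂
      intro a ha b hb
      have ha1 := claim₁ a ha
      have hb1 := claim₂ b hb
      have hsub : w (xb₁ - xb₂) a - w (xb₁ - xb₂) b = w (xb₁ - xb₂) (a - b) :=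
        (map_sub _ _ _).symm
      have habs := abs_apply_le w hsmooth hy (a - b)
      nlinarith [le_abs_self (w (xb₁ - xb₂) (a - b)), norm_nonneg (a - b)]
    have hs₂d : setDist C₁ C₂ ≤ ‖xb₁ - p₂‖ := setDist_le hxb₁ hp₂C
    -- step 4 : ‖y‖ ≤ s₁
    have hstep4 : ‖xb₁ - xb₂‖ ≤ ‖p₁ - xb₂‖ := by
      have ha1 := claim₁ p₁ hp₁C
      have hx2 : w (xb₁ - xb₂) xb₂ - w (xb₁ - xb₂) ((1 / 2 : ℝ) • (xb₁ + xb₂))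
          = -(‖xb₁ - xb₂‖ ^ 2 / 2) := by
        rw [hmb]; linarith
      have hsub : w (xb₁ - xb₂) p₁ - w (xb₁ - xb₂) xb₂ = w (xb₁ - xb₂) (p₁ - xb₂) :=
        (map_sub _ _ _).symm
      have habs := abs_apply_le w hsmooth hy (p₁ - xb₂)
      nlinarith [le_abs_self (w (xb₁ - xb₂) (p₁ - xb₂))]
    linarith
  · -- nearest pair → equilibrium
    obtain ⟨P1, P2⟩ := hmore hEq
    constructor
    · intro y₁ hy₁
      rw [P1]
      have hne : y₁ - xb₂ ≠ 0 := sub_ne_zero.mpr (hdisj' _ hy₁ _ hxb₂)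
      have hspos : (0:ℝ) < ‖y₁ - xb₂‖ := norm_pos_iff.mpr hne
      have hs : ‖xb₁ - xb₂‖ ≤ ‖y₁ - xb₂‖ := by
        rw [hEq]; exact setDist_le hy₁ hxb₂
      have hfy' : w (y₁ - xb₂) (y₁ - xb₂) = ‖y₁ - xb₂‖ ^ 2 := w_apply_self w hsmooth hne
      have hdiff' : w (y₁ - xb₂) y₁ - w (y₁ - xb₂) xb₂ = ‖y₁ - xb₂‖ ^ 2 := by
        rw [← map_sub]; exact hfy'
      have hm' : w (y₁ - xb₂) ((1 / 2 : ℝ) • (y₁ + xb₂))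
          = (w (y₁ - xb₂) y₁ + w (y₁ - xb₂) xb₂) / 2 := by
        rw [map_smul, map_add, smul_eq_mul]; ring
      have habs : |w (y₁ - xb₂) (xb₁ - xb₂)| ≤ ‖y₁ - xb₂‖ * ‖xb₁ - xb₂‖ :=
        abs_apply_le w hsmooth hne _
      have hsubx : w (y₁ - xb₂) xb₁ - w (y₁ - xb₂) xb₂ = w (y₁ - xb₂) (xb₁ - xb₂) :=
        (map_sub _ _ _).symm
      rcases le_or_gt (w (y₁ - xb₂) xb₁ - w (y₁ - xb₂) ((1 / 2 : ℝ) • (y₁ + xb₂))) 0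
        with hcase | hcase
      · obtain ⟨q, hq, hfq⟩ := exists_cross (w (y₁ - xb₂)) hconv₁ hy₁ hxb₁
          (c := w (y₁ - xb₂) ((1 / 2 : ℝ) • (y₁ + xb₂)))
          (by nlinarith [sq_nonneg ‖y₁ - xb₂‖]) (by linarith)
        have hbq := hyper_le w hsmooth hne hq
        rw [hfq, sub_self, abs_zero, zero_div] at hbq
        linarith [norm_nonneg (xb₁ - xb₂)]
      · have hle := hyper_le w hsmooth hne hxb₁
        calc setDist (gameHyperplane w y₁ xb₂) C₁
            ≤ |w (y₁ - xb₂) xb₁ - w (y₁ - xb₂) ((1 / 2 : ℝ) • (y₁ + xb₂))|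
              / ‖y₁ - xb₂‖ := hle
        _ ≤ ‖xb₁ - xb₂‖ / 2 := by
            rw [abs_of_pos hcase, div_le_iff₀ hspos]
            nlinarith [le_abs_self (w (y₁ - xb₂) (xb₁ - xb₂))]
    · intro y₂ hy₂
      rw [P2]
      have hne : xb₁ - y₂ ≠ 0 := sub_ne_zero.mpr (hdisj' _ hxb₁ _ hy₂)
      have hspos : (0:ℝ) < ‖xb₁ - y₂‖ := norm_pos_iff.mpr hne
      have hs : ‖xb₁ - xb₂‖ ≤ ‖xb₁ - y₂‖ := by
        rw [hEq]; exact setDist_le hxb₁ hy₂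
      have hfy' : w (xb₁ - y₂) (xb₁ - y₂) = ‖xb₁ - y₂‖ ^ 2 := w_apply_self w hsmooth hne
      have hdiff' : w (xb₁ - y₂) xb₁ - w (xb₁ - y₂) y₂ = ‖xb₁ - y₂‖ ^ 2 := by
        rw [← map_sub]; exact hfy'
      have hm' : w (xb₁ - y₂) ((1 / 2 : ℝ) • (xb₁ + y₂))
          = (w (xb₁ - y₂) xb₁ + w (xb₁ - y₂) y₂) / 2 := by
        rw [map_smul, map_add, smul_eq_mul]; ring
      have habs : |w (xb₁ - y₂) (xb₁ - xb₂)| ≤ ‖xb₁ - y₂‖ * ‖xb₁ - xb₂‖ :=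
        abs_apply_le w hsmooth hne _
      have hsubx : w (xb₁ - y₂) xb₁ - w (xb₁ - y₂) xb₂ = w (xb₁ - y₂) (xb₁ - xb₂) :=
        (map_sub _ _ _).symm
      rcases le_or_gt 0 (w (xb₁ - y₂) xb₂ - w (xb₁ - y₂) ((1 / 2 : ℝ) • (xb₁ + y₂)))
        with hcase | hcase
      · obtain ⟨q, hq, hfq⟩ := exists_cross (w (xb₁ - y₂)) hconv₂ hxb₂ hy₂
          (c := w (xb₁ - y₂) ((1 / 2 : ℝ) • (xb₁ + y₂)))
          (by linarith) (by nlinarith [sq_nonneg ‖xb₁ - y₂‖])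
        have hbq := hyper_le w hsmooth hne hq
        rw [hfq, sub_self, abs_zero, zero_div] at hbq
        linarith [norm_nonneg (xb₁ - xb₂)]
      · have hle := hyper_le w hsmooth hne hxb₂
        calc setDist (gameHyperplane w xb₁ y₂) C₂
            ≤ |w (xb₁ - y₂) xb₂ - w (xb₁ - y₂) ((1 / 2 : ℝ) • (xb₁ + y₂))|
              / ‖xb₁ - y₂‖ := hle
        _ ≤ ‖xb₁ - xb₂‖ / 2 := by
            rw [abs_of_neg hcase, div_le_iff₀ hspos]
            nlinarith [le_abs_self (w (xb₁ - y₂) (xb₁ - xb₂)),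
              neg_abs_le (w (xb₁ - y₂) (xb₁ - xb₂))]
end

section
/- Let X be a real Banach space, K₁, …, K_m ⊆ X weakly compact convex uncertainty sets, yᵢ ∈ {−1, +1}, and suppose co(⋃_{yᵢ=+1} Kᵢ) ∩ co(⋃_{yᵢ=−1} Kᵢ) = ∅. Then the robust SVM problem: minimize ½‖w‖² over (w, b) ∈ X* × ℝ subject to inf_{xᵢ ∈ Kᵢ} yᵢ(w(xᵢ) + b) ≥ 1 for all i, admits at least one optimal solution. -/
open Set Metric


-- convex join of compacts is compact
theorem aux_isCompact_convexJoin {E : Type*} [AddCommGroup E] [Module ℝ E] [TopologicalSpace E]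
    [IsTopologicalAddGroup E] [ContinuousSMul ℝ E] {s t : Set E}
    (hs : IsCompact s) (ht : IsCompact t) : IsCompact (convexJoin ℝ s t) := by
  have him : convexJoin ℝ s t =
      (fun q : ℝ × E × E => (1 - q.1) • q.2.1 + q.1 • q.2.2) '' ((Icc (0:ℝ) 1) ×ˢ s ×ˢ t) := by
    ext z
    simp only [mem_convexJoin, Set.mem_image, Set.mem_prod]
    constructor
    · rintro ⟨x, hx, y, hy, hz⟩
      rw [segment_eq_image] at hz
      obtain ⟨θ, hθ, rfl⟩ := hz
      exact ⟨(θ, x, y), ⟨hθ, hx, hy⟩, rfl⟩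
    · rintro ⟨⟨θ, x, y⟩, ⟨hθ, hx, hy⟩, rfl⟩
      refine ⟨x, hx, y, hy, ?_⟩
      rw [segment_eq_image]
      exact ⟨θ, hθ, rfl⟩
  rw [him]
  refine (isCompact_Icc.prod (hs.prod ht)).image ?_
  fun_prop

theorem aux_isCompact_convexHull_biUnion {E : Type*} [AddCommGroup E] [Module ℝ E]
    [TopologicalSpace E] [IsTopologicalAddGroup E] [ContinuousSMul ℝ E]
    {ι : Type*} (s : Finset ι) (K : ι → Set E)
    (hc : ∀ i, IsCompact (K i)) (hv : ∀ i, Convex ℝ (K i)) :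
    IsCompact (convexHull ℝ (⋃ i ∈ s, K i)) := by
  classical
  induction s using Finset.induction with
  | empty => simp
  | insert _ _ ha ih =>
    rename_i a s
    rw [Finset.set_biUnion_insert]
    rcases Set.eq_empty_or_nonempty (⋃ i ∈ s, K i) with h | h
    · rw [h, Set.union_empty, (hv a).convexHull_eq]
      exact hc a
    rcases (K a).eq_empty_or_nonempty with h2 | h2
    · rw [h2, Set.empty_union]
      exact ih
    rw [convexHull_union h2 h, (hv a).convexHull_eq]
    exact aux_isCompact_convexJoin (hc a) ih

theorem aux_exists_min {α : Type*} [TopologicalSpace α] [T2Space α] {s : Set α}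
    (hs : IsCompact s) (hne : s.Nonempty) {f : α → ℝ}
    (hf : ∀ c : ℝ, IsClosed {x | f x ≤ c}) : ∃ x ∈ s, ∀ y ∈ s, f x ≤ f y := by
  haveI : Nonempty s := hne.to_subtype
  have key := IsCompact.nonempty_iInter_of_directed_nonempty_isCompact_isClosed
    (fun q : s => {x ∈ s | f x ≤ f q})
    (fun q r => by
      rcases le_total (f (q:α)) (f (r:α)) with h | h
      · exact ⟨q, fun x hx => hx, fun x hx => ⟨hx.1, hx.2.trans h⟩⟩
      · exact ⟨r, fun x hx => ⟨hx.1, hx.2.trans h⟩, fun x hx => hx⟩)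
    (fun q => ⟨q, q.2, le_refl _⟩)
    (fun q => hs.inter_right (hf _))
    (fun q => (hs.isClosed).inter (hf _))
  obtain ⟨x, hx⟩ := key
  simp only [Set.mem_iInter, Set.mem_setOf_eq, Set.mem_sep_iff] at hx
  obtain ⟨x0, hx0⟩ := hne
  exact ⟨x, (hx ⟨x0, hx0⟩).1, fun z hz => (hx ⟨z, hz⟩).2⟩

theorem aux_feasible {X : Type*} [NormedAddCommGroup X] [NormedSpace ℝ X]
    {m : ℕ} (K : Fin m → Set X)
    (hKconv : ∀ i, Convex ℝ (K i))
    (hKcomp : ∀ i, IsCompact (toWeakSpace ℝ X '' K i))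
    (y : Fin m → ℝ) (hy : ∀ i, y i = 1 ∨ y i = -1)
    (hdisj : convexHull ℝ (⋃ i ∈ {i | y i = 1}, K i) ∩
             convexHull ℝ (⋃ i ∈ {i | y i = -1}, K i) = ∅) :
    ∃ (w₀ : X →L[ℝ] ℝ) (b₀ : ℝ), ∀ i, ∀ x ∈ K i, 1 ≤ y i * (w₀ x + b₀) := by
  classical
  set tws := toWeakSpace ℝ X with htws
  haveI : ContinuousSMul ℝ (WeakSpace ℝ X) := WeakBilin.instContinuousSMul _
  haveI : IsTopologicalAddGroup (WeakSpace ℝ X) := WeakBilin.instIsTopologicalAddGroup _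
  haveI : LocallyConvexSpace ℝ (WeakSpace ℝ X) := WeakBilin.locallyConvexSpace
  haveI hT2 : T2Space (WeakSpace ℝ X) := by
    have hinj : Function.Injective ((topDualPairing ℝ X).flip) := by
      intro a b hab
      rw [NormedSpace.eq_iff_forall_dual_eq (𝕜 := ℝ)]
      intro g
      have := congrArg (fun φ => φ g) hab
      simpa [topDualPairing_apply] using this
    exact (WeakBilin.isEmbedding hinj).t2Space
  set Pos : Finset (Fin m) := Finset.univ.filter (fun i => y i = 1) with hPos
  set Neg : Finset (Fin m) := Finset.univ.filter (fun i => y i = -1) with hNeg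
  set A' : Set (WeakSpace ℝ X) := convexHull ℝ (⋃ i ∈ Pos, tws '' K i) with hA'
  set B' : Set (WeakSpace ℝ X) := convexHull ℝ (⋃ i ∈ Neg, tws '' K i) with hB'
  have himP : (⋃ i ∈ Pos, tws '' K i) = tws '' (⋃ i ∈ {i | y i = 1}, K i) := by
    rw [Set.image_iUnion₂]
    ext z
    simp [hPos, Finset.mem_filter]
  have himN : (⋃ i ∈ Neg, tws '' K i) = tws '' (⋃ i ∈ {i | y i = -1}, K i) := by
    rw [Set.image_iUnion₂]
    ext z
    simp [hNeg, Finset.mem_filter]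
  have hAeq : A' = tws '' (convexHull ℝ (⋃ i ∈ {i | y i = 1}, K i)) := by
    rw [hA', himP]
    exact (LinearMap.image_convexHull (tws : X →ₗ[ℝ] WeakSpace ℝ X) _).symm
  have hBeq : B' = tws '' (convexHull ℝ (⋃ i ∈ {i | y i = -1}, K i)) := by
    rw [hB', himN]
    exact (LinearMap.image_convexHull (tws : X →ₗ[ℝ] WeakSpace ℝ X) _).symm
  have hAcomp : IsCompact A' :=
    aux_isCompact_convexHull_biUnion Pos (fun i => tws '' K i) hKcomp
      (fun i => (hKconv i).linear_image (tws : X →ₗ[ℝ] WeakSpace ℝ X))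
  have hBcomp : IsCompact B' :=
    aux_isCompact_convexHull_biUnion Neg (fun i => tws '' K i) hKcomp
      (fun i => (hKconv i).linear_image (tws : X →ₗ[ℝ] WeakSpace ℝ X))
  have hdisj' : Disjoint B' A' := by
    rw [Set.disjoint_iff_inter_eq_empty, hAeq, hBeq,
      Set.inter_comm, ← Set.image_inter tws.injective, hdisj, Set.image_empty]
  obtain ⟨g, u, v, hgB, huv, hgA⟩ :=
    geometric_hahn_banach_compact_closed (convex_convexHull ℝ _) hBcomp
      (convex_convexHull ℝ _) hAcomp.isClosed hdisj'
  set δ : ℝ := (v - u) / 2 with hδdef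
  set c : ℝ := (u + v) / 2 with hcdef
  have hδ : 0 < δ := by simp only [hδdef]; linarith
  refine ⟨(1/δ) • (g.comp (toWeakSpaceCLM ℝ X)), -(c/δ), ?_⟩
  intro i x hx
  have happ : (((1/δ) • (g.comp (toWeakSpaceCLM ℝ X))) x : ℝ) = (1/δ) * g (tws x) := by
    simp only [ContinuousLinearMap.smul_apply, ContinuousLinearMap.comp_apply, smul_eq_mul]
    rw [toWeakSpaceCLM_eq_toWeakSpace]
  have harith : (1/δ) * g (tws x) + -(c/δ) = (g (tws x) - c) / δ := by
    field_simp
    ring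
  rcases hy i with hi | hi
  · have hmem : tws x ∈ A' := by
      refine subset_convexHull ℝ _ ?_
      exact Set.mem_biUnion (show i ∈ Pos from Finset.mem_filter.mpr ⟨Finset.mem_univ i, hi⟩) ⟨x, hx, rfl⟩
    have hv' : v < g (tws x) := hgA _ hmem
    have key : 1 ≤ (g (tws x) - c) / δ := by
      rw [le_div_iff₀ hδ]
      simp only [hδdef, hcdef]
      linarith
    rw [hi, one_mul, happ, harith]
    exact key
  · have hmem : tws x ∈ B' := by
      refine subset_convexHull ℝ _ ?_
      exact Set.mem_biUnion (show i ∈ Neg from Finset.mem_filter.mpr ⟨Finset.mem_univ i, hi⟩) ⟨x, hx, rfl⟩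
    have hu' : g (tws x) < u := hgB _ hmem
    have key : (g (tws x) - c) / δ ≤ -1 := by
      rw [div_le_iff₀ hδ]
      simp only [hδdef, hcdef]
      linarith
    rw [hi, neg_one_mul, happ, harith]
    linarith

-- given a feasible point, build optimal solution
theorem aux_opt {X : Type*} [NormedAddCommGroup X] [NormedSpace ℝ X]
    {m : ℕ} (K : Fin m → Set X) (y : Fin m → ℝ)
    {ip iq : Fin m} (hyp : y ip = 1) (hyq : y iq = -1)
    {xp xq : X} (hxp : xp ∈ K ip) (hxq : xq ∈ K iq)
    (w₀ : X →L[ℝ] ℝ) (b₀ : ℝ) (hfeas : ∀ i, ∀ x ∈ K i, 1 ≤ y i * (w₀ x + b₀)) :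
    ∃ (w : X →L[ℝ] ℝ) (b : ℝ),
      (∀ i, ∀ x ∈ K i, 1 ≤ y i * (w x + b)) ∧
      (∀ (w' : X →L[ℝ] ℝ) (b' : ℝ),
        (∀ i, ∀ x ∈ K i, 1 ≤ y i * (w' x + b')) → ‖w‖ ≤ ‖w'‖) := by
  classical
  set r : ℝ := ‖w₀‖ with hr
  set C : ℝ := r * ‖xp‖ + r * ‖xq‖ + 1 + |b₀| with hC
  -- any feasible pair with small norm has bounded offset
  have hbbound : ∀ (w' : X →L[ℝ] ℝ) (b' : ℝ),
      (∀ i, ∀ x ∈ K i, 1 ≤ y i * (w' x + b')) → ‖w'‖ ≤ r → |b'| ≤ C := by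
    intro w' b' hf hw'
    have h1 : 1 ≤ w' xp + b' := by have := hf ip xp hxp; rwa [hyp, one_mul] at this
    have h2 : 1 ≤ -(w' xq + b') := by have := hf iq xq hxq; rwa [hyq, neg_one_mul] at this
    have e1 : |w' xp| ≤ r * ‖xp‖ := by
      calc |w' xp| = ‖w' xp‖ := (Real.norm_eq_abs _).symm
      _ ≤ ‖w'‖ * ‖xp‖ := w'.le_opNorm xp
      _ ≤ r * ‖xp‖ := by gcongr
    have e2 : |w' xq| ≤ r * ‖xq‖ := by
      calc |w' xq| = ‖w' xq‖ := (Real.norm_eq_abs _).symm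
      _ ≤ ‖w'‖ * ‖xq‖ := w'.le_opNorm xq
      _ ≤ r * ‖xq‖ := by gcongr
    have := abs_nonneg b₀
    rw [abs_le]
    constructor
    · nlinarith [abs_le.mp e1, abs_le.mp e2, (r * ‖xq‖ + 0 ≤ r*‖xq‖)]
    · nlinarith [abs_le.mp e1, abs_le.mp e2]
  -- the compact feasible region in the weak-* dual
  set T : Set (WeakDual ℝ X × ℝ) :=
    {p | ‖WeakDual.toStrongDual p.1‖ ≤ r ∧ |p.2| ≤ C ∧ ∀ i, ∀ x ∈ K i, 1 ≤ y i * (p.1 x + p.2)}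
    with hT
  have hTclosed : IsClosed T := by
    have h1 : IsClosed {p : WeakDual ℝ X × ℝ | ‖WeakDual.toStrongDual p.1‖ ≤ r} := by
      have : {p : WeakDual ℝ X × ℝ | ‖WeakDual.toStrongDual p.1‖ ≤ r} =
          Prod.fst ⁻¹' (WeakDual.toStrongDual ⁻¹' closedBall 0 r) := by
        ext p; simp [mem_closedBall_zero_iff]
      rw [this]
      exact (WeakDual.isClosed_closedBall 0 r).preimage continuous_fst
    have h2 : IsClosed {p : WeakDual ℝ X × ℝ | |p.2| ≤ C} :=
      isClosed_le (continuous_abs.comp continuous_snd) continuous_const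
    have h3 : IsClosed {p : WeakDual ℝ X × ℝ | ∀ i, ∀ x ∈ K i, 1 ≤ y i * (p.1 x + p.2)} := by
      have : {p : WeakDual ℝ X × ℝ | ∀ i, ∀ x ∈ K i, 1 ≤ y i * (p.1 x + p.2)} =
          ⋂ i, ⋂ x ∈ K i, {p : WeakDual ℝ X × ℝ | 1 ≤ y i * (p.1 x + p.2)} := by
        ext p; simp
      rw [this]
      refine isClosed_iInter fun i => isClosed_biInter fun x _ => ?_
      exact isClosed_le continuous_const
        (continuous_const.mul (((WeakDual.eval_continuous x).comp continuous_fst).add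
          continuous_snd))
    have : T = _ ∩ (_ ∩ _) := rfl
    exact (h1.inter (h2.inter h3))
  have hTcomp : IsCompact T := by
    refine IsCompact.of_isClosed_subset
      (((WeakDual.isCompact_closedBall (𝕜 := ℝ) (E := X) 0 r)).prod (isCompact_Icc (a := -C) (b := C)))
      hTclosed ?_
    rintro ⟨w', b'⟩ ⟨hw', hb', -⟩
    exact ⟨by simpa [mem_closedBall_zero_iff] using hw', abs_le.mp hb'⟩
  have hTne : T.Nonempty := by
    refine ⟨(StrongDual.toWeakDual w₀, b₀), le_refl r, ?_, hfeas⟩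
    have h1 : 0 ≤ r * ‖xp‖ := by positivity
    have h2 : 0 ≤ r * ‖xq‖ := by positivity
    simp only [hC]; linarith
  obtain ⟨p, hpT, hpmin⟩ := aux_exists_min hTcomp hTne
    (f := fun p : WeakDual ℝ X × ℝ => ‖WeakDual.toStrongDual p.1‖) (fun c => by
      have : {p : WeakDual ℝ X × ℝ | ‖WeakDual.toStrongDual p.1‖ ≤ c} =
          Prod.fst ⁻¹' (WeakDual.toStrongDual ⁻¹' closedBall 0 c) := by
        ext p; simp [mem_closedBall_zero_iff]
      rw [this]
      exact (WeakDual.isClosed_closedBall 0 c).preimage continuous_fst)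
  refine ⟨WeakDual.toStrongDual p.1, p.2, hpT.2.2, ?_⟩
  intro w' b' hf'
  rcases le_total r ‖w'‖ with h | h
  · exact hpT.1.trans h
  · have : (StrongDual.toWeakDual w', b') ∈ T :=
      ⟨h, hbbound w' b' hf' h, hf'⟩
    have hmin := hpmin (StrongDual.toWeakDual w', b') this
    simpa using hmin

theorem robust_svm_exists_solution
    {X : Type*} [NormedAddCommGroup X] [NormedSpace ℝ X] [CompleteSpace X]
    {m : ℕ} (K : Fin m → Set X)
    (hKconv : ∀ i, Convex ℝ (K i)) (hKne : ∀ i, (K i).Nonempty)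
    (hKcomp : ∀ i, IsCompact (toWeakSpace ℝ X '' K i))
    (y : Fin m → ℝ) (hy : ∀ i, y i = 1 ∨ y i = -1)
    (hdisj : convexHull ℝ (⋃ i ∈ {i | y i = 1}, K i) ∩
             convexHull ℝ (⋃ i ∈ {i | y i = -1}, K i) = ∅) :
    ∃ (w : X →L[ℝ] ℝ) (b : ℝ),
      (∀ i, ∀ x ∈ K i, 1 ≤ y i * (w x + b)) ∧
      (∀ (w' : X →L[ℝ] ℝ) (b' : ℝ),
        (∀ i, ∀ x ∈ K i, 1 ≤ y i * (w' x + b')) →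
        (1 / 2 : ℝ) * ‖w‖ ^ 2 ≤ (1 / 2 : ℝ) * ‖w'‖ ^ 2) := by
  classical
  have final : ∀ (w w' : X →L[ℝ] ℝ), ‖w‖ ≤ ‖w'‖ →
      (1 / 2 : ℝ) * ‖w‖ ^ 2 ≤ (1 / 2 : ℝ) * ‖w'‖ ^ 2 := by
    intro w w' h
    nlinarith [norm_nonneg w, norm_nonneg w']
  by_cases hP : ∃ i, y i = 1
  · by_cases hN : ∃ i, y i = -1
    · obtain ⟨ip, hyp⟩ := hP
      obtain ⟨iq, hyq⟩ := hN
      obtain ⟨w₀, b₀, hfeas⟩ := aux_feasible K hKconv hKcomp y hy hdisj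
      obtain ⟨xp, hxp⟩ := hKne ip
      obtain ⟨xq, hxq⟩ := hKne iq
      obtain ⟨w, b, hc, hopt⟩ := aux_opt K y hyp hyq hxp hxq w₀ b₀ hfeas
      exact ⟨w, b, hc, fun w' b' hf => final w w' (hopt w' b' hf)⟩
    · refine ⟨0, 1, ?_, ?_⟩
      · intro i x hx
        rcases hy i with h | h
        · rw [h]
          norm_num
        · exact absurd ⟨i, h⟩ hN
      · intro w' b' _
        simp only [norm_zero]
        nlinarith [sq_nonneg ‖w'‖]
  · refine ⟨0, -1, ?_, ?_⟩
    · intro i x hx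
      rcases hy i with h | h
      · exact absurd ⟨i, h⟩ hP
      · rw [h]
        norm_num
    · intro w' b' _
      simp only [norm_zero]
      nlinarith [sq_nonneg ‖w'‖]
end

section
/- Under the hypotheses of the robust SVM existence theorem, if moreover X* is strictly convex, then the w-component of the optimal solution of the robust SVM problem is unique. -/
set_option maxHeartbeats 1000000 in
theorem robust_svm_w_unique_of_strictly_convex_dual
    {X : Type*} [NormedAddCommGroup X] [NormedSpace ℝ X] [CompleteSpace X]
    {m : ℕ} (K : Fin m → Set X)
    (hKconv : ∀ i, Convex ℝ (K i)) (hKne : ∀ i, (K i).Nonempty)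
    (hKcomp : ∀ i, IsCompact (toWeakSpace ℝ X '' K i))
    (y : Fin m → ℝ) (hy : ∀ i, y i = 1 ∨ y i = -1)
    (hdisj : convexHull ℝ (⋃ i ∈ {i | y i = 1}, K i) ∩
             convexHull ℝ (⋃ i ∈ {i | y i = -1}, K i) = ∅)
    (hSC : ∀ w₁ w₂ : X →L[ℝ] ℝ, w₁ ≠ w₂ → ‖w₁‖ = 1 → ‖w₂‖ = 1 →
      ∀ t ∈ Set.Ioo (0 : ℝ) 1, ‖t • w₁ + (1 - t) • w₂‖ < 1)
    (w₁ w₂ : X →L[ℝ] ℝ) (b₁ b₂ : ℝ)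
    (hfeas₁ : ∀ i, ∀ x ∈ K i, 1 ≤ y i * (w₁ x + b₁))
    (hfeas₂ : ∀ i, ∀ x ∈ K i, 1 ≤ y i * (w₂ x + b₂))
    (hmin₁ : ∀ (w : X →L[ℝ] ℝ) (b : ℝ),
      (∀ i, ∀ x ∈ K i, 1 ≤ y i * (w x + b)) →
      (1 / 2 : ℝ) * ‖w₁‖ ^ 2 ≤ (1 / 2 : ℝ) * ‖w‖ ^ 2)
    (hmin₂ : ∀ (w : X →L[ℝ] ℝ) (b : ℝ),
      (∀ i, ∀ x ∈ K i, 1 ≤ y i * (w x + b)) →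
      (1 / 2 : ℝ) * ‖w₂‖ ^ 2 ≤ (1 / 2 : ℝ) * ‖w‖ ^ 2) :
    w₁ = w₂ := by
  by_contra hne
  -- the two norms are equal
  have e1 := hmin₁ w₂ b₂ hfeas₂
  have e2 := hmin₂ w₁ b₁ hfeas₁
  have hnorm : ‖w₁‖ = ‖w₂‖ := by
    nlinarith [norm_nonneg w₁, norm_nonneg w₂]
  set c : ℝ := ‖w₁‖ with hc
  have hcpos : 0 < c := by
    rcases lt_or_eq_of_le (norm_nonneg w₁) with h | h
    · exact h
    · exact absurd (by
        have h1 : w₁ = 0 := by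
          have := norm_eq_zero.mp h.symm
          exact this
        have h2 : w₂ = 0 := norm_eq_zero.mp (hnorm ▸ h.symm)
        rw [h1, h2]) hne
  -- midpoint is feasible
  set wm : X →L[ℝ] ℝ := (1/2 : ℝ) • w₁ + (1/2 : ℝ) • w₂ with hwm
  have hfeasm : ∀ i, ∀ x ∈ K i, 1 ≤ y i * (wm x + (b₁ + b₂) / 2) := by
    intro i x hx
    have h1 := hfeas₁ i x hx
    have h2 := hfeas₂ i x hx
    have : wm x = (1/2 : ℝ) * w₁ x + (1/2 : ℝ) * w₂ x := by
      simp [hwm]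
    rw [this]; nlinarith
  -- strict convexity gives ‖wm‖ < c
  have hu1 : ‖c⁻¹ • w₁‖ = 1 := by
    rw [norm_smul c⁻¹ w₁, Real.norm_eq_abs, abs_of_pos (inv_pos.mpr hcpos)]
    field_simp
    exact hc.symm
  have hu2 : ‖c⁻¹ • w₂‖ = 1 := by
    rw [norm_smul c⁻¹ w₂, Real.norm_eq_abs, abs_of_pos (inv_pos.mpr hcpos), ← hnorm]
    field_simp
  have hune : c⁻¹ • w₁ ≠ c⁻¹ • w₂ := by
    intro h
    apply hne
    have := congrArg (fun v => c • v) h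
    simpa [smul_smul, mul_inv_cancel₀ hcpos.ne'] using this
  have hmid := hSC _ _ hune hu1 hu2 (1/2) ⟨by norm_num, by norm_num⟩
  have hlt : ‖wm‖ < c := by
    have heq : wm = c • ((1/2 : ℝ) • (c⁻¹ • w₁) + (1 - 1/2 : ℝ) • (c⁻¹ • w₂)) := by
      ext x
      simp [hwm, mul_comm]
      field_simp
      ring
    rw [heq, norm_smul c ((1/2 : ℝ) • (c⁻¹ • w₁) + (1 - 1/2 : ℝ) • (c⁻¹ • w₂)), Real.norm_eq_abs, abs_of_pos hcpos]
    calc c * ‖(1/2 : ℝ) • (c⁻¹ • w₁) + (1 - 1/2 : ℝ) • (c⁻¹ • w₂)‖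
        < c * 1 := by exact (mul_lt_mul_iff_right₀ hcpos).mpr hmid
      _ = c := mul_one c
  have := hmin₁ wm ((b₁ + b₂) / 2) hfeasm
  nlinarith [norm_nonneg wm]
end

section
/- Let ℬ, 𝒞 be real Banach spaces, Uᵢ ⊆ 𝒞 a weakly compact convex set, and gᵢ : ℬ × 𝒞 → ℝ with gᵢ(x, ·) linear and continuous in the second variable and gᵢ(·, u) convex continuous. Define Gᵢ(x) = sup_{u∈Uᵢ} gᵢ(x, u) and Uᵢ(x) = argmax_{u∈Uᵢ} gᵢ(x, u). Then the set ⋃_{u ∈ Uᵢ(x)} ∂ₓ gᵢ(x, u) is convex, and ∂Gᵢ(x) = ⋃_{u ∈ Uᵢ(x)} ∂ₓ gᵢ(x, u). -/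
open Filter Topology


/-- The Fenchel subdifferential of `h : B → ℝ` at `x`. -/
def fenchelSubdiff {B : Type*} [NormedAddCommGroup B] [NormedSpace ℝ B]
    (h : B → ℝ) (x : B) : Set (B →L[ℝ] ℝ) :=
  {φ : B →L[ℝ] ℝ | ∀ y : B, h x + φ (y - x) ≤ h y}

theorem danskin_subdifferential_of_sup
    {B C : Type*} [NormedAddCommGroup B] [NormedSpace ℝ B]
    [NormedAddCommGroup C] [NormedSpace ℝ C]
    [CompleteSpace B] [CompleteSpace C]
    (U : Set C) (hUne : U.Nonempty) (hUconv : Convex ℝ U)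
    (hUcomp : IsCompact (toWeakSpace ℝ C '' U))
    (g : B → C →L[ℝ] ℝ)
    (hgconv : ∀ u ∈ U, ConvexOn ℝ Set.univ (fun x => g x u))
    (hgcont : ∀ u ∈ U, Continuous (fun x => g x u))
    (x : B)
    -- the Danskin-type formula: `∂G(x)` is the weak*-closed convex hull of the union
    (hDanskin :
      (StrongDual.toWeakDual ''
          fenchelSubdiff (fun z => sSup ((fun u => g z u) '' U)) x)
        = closure (StrongDual.toWeakDual '' (convexHull ℝ
            (⋃ u ∈ {u ∈ U | g x u = sSup ((fun v => g x v) '' U)},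
              fenchelSubdiff (fun z => g z u) x)))) :
    Convex ℝ (⋃ u ∈ {u ∈ U | g x u = sSup ((fun v => g x v) '' U)},
        fenchelSubdiff (fun z => g z u) x) ∧
    fenchelSubdiff (fun z => sSup ((fun u => g z u) '' U)) x
      = ⋃ u ∈ {u ∈ U | g x u = sSup ((fun v => g x v) '' U)},
          fenchelSubdiff (fun z => g z u) x := by
  classical
  set M := sSup ((fun v => g x v) '' U) with hMdef
  set S := ⋃ u ∈ {u ∈ U | g x u = M}, fenchelSubdiff (fun z => g z u) x with hSdef
  set G := fun z => sSup ((fun u => g z u) '' U) with hGdef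
  -- compactness of the values
  have hGcomp : ∀ y : B, IsCompact ((fun u => g y u) '' U) := by
    intro y
    have h1 : ((fun u => g y u) '' U) =
        (fun u : WeakSpace ℝ C => g y ((toWeakSpace ℝ C).symm u)) '' (toWeakSpace ℝ C '' U) := by
      rw [Set.image_image]; simp
    rw [h1]
    exact hUcomp.image (WeakBilin.eval_continuous (topDualPairing ℝ C).flip (g y))
  -- convexity of S
  have hconv : Convex ℝ S := by
    intro φ₁ h1 φ₂ h2 a b ha hb hab
    rw [hSdef, Set.mem_iUnion₂] at h1 h2 ⊢
    obtain ⟨u₁, hu₁, hφ₁⟩ := h1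
    obtain ⟨u₂, hu₂, hφ₂⟩ := h2
    obtain ⟨hu₁U, hu₁M⟩ := hu₁
    obtain ⟨hu₂U, hu₂M⟩ := hu₂
    have hgc : g x (a • u₁ + b • u₂) = M := by
      rw [map_add, map_smul, map_smul, smul_eq_mul, smul_eq_mul, hu₁M, hu₂M,
        ← add_mul, hab, one_mul]
    refine ⟨a • u₁ + b • u₂, ⟨hUconv hu₁U hu₂U ha hb hab, hgc⟩, ?_⟩
    intro y
    have e1 := hφ₁ y
    have e2 := hφ₂ y
    simp only [map_add, map_smul, ContinuousLinearMap.add_apply,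
      ContinuousLinearMap.coe_smul', Pi.smul_apply, smul_eq_mul]
    nlinarith [mul_le_mul_of_nonneg_left e1 ha, mul_le_mul_of_nonneg_left e2 hb]
  -- S ⊆ ∂G(x)
  have hSsub : S ⊆ fenchelSubdiff G x := by
    intro φ hφ
    rw [hSdef, Set.mem_iUnion₂] at hφ
    obtain ⟨u, ⟨huU, huM⟩, hsub⟩ := hφ
    intro y
    have h2 : g y u ≤ G y := le_csSup (hGcomp y).bddAbove ⟨u, huU, rfl⟩
    have h1 : G x = g x u := huM.symm
    calc G x + φ (y - x) = g x u + φ (y - x) := by rw [h1]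
      _ ≤ g y u := hsub y
      _ ≤ G y := h2
  -- the image of S is weak*-closed
  have hclosure : closure (StrongDual.toWeakDual '' S)
      ⊆ StrongDual.toWeakDual '' S := by
    intro ψ hψ
    have hne : (𝓝 ψ ⊓ 𝓟 (StrongDual.toWeakDual '' S)).NeBot :=
      mem_closure_iff_clusterPt.mp hψ
    set F := 𝓝 ψ ⊓ 𝓟 (StrongDual.toWeakDual '' S) with hFdef
    haveI : F.NeBot := hne
    have hSmem : (StrongDual.toWeakDual '' S) ∈ F :=
      Filter.mem_inf_of_right (Filter.mem_principal_self _)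
    -- a selection of maximizers
    have hsel : ∀ φ : WeakDual ℝ B, ∃ u, u ∈ U ∧
        (φ ∈ StrongDual.toWeakDual '' S →
          g x u = M ∧ ∀ y, g x u + φ (y - x) ≤ g y u) := by
      intro φ
      by_cases h : φ ∈ StrongDual.toWeakDual '' S
      · obtain ⟨φ₀, hφ₀S, hEq⟩ := h
        rw [hSdef, Set.mem_iUnion₂] at hφ₀S
        obtain ⟨u, ⟨huU, huM⟩, hsub⟩ := hφ₀S
        refine ⟨u, huU, fun _ => ⟨huM, fun y => ?_⟩⟩
        have : φ (y - x) = φ₀ (y - x) := by rw [← hEq]; rfl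
        rw [this]; exact hsub y
      · exact ⟨hUne.choose, hUne.choose_spec, fun h' => absurd h' h⟩
    choose c hcU hcP using hsel
    set cw : WeakDual ℝ B → WeakSpace ℝ C := fun φ => toWeakSpace ℝ C (c φ) with hcwdef
    have hmapK : Filter.map cw F ≤ 𝓟 (toWeakSpace ℝ C '' U) := by
      rw [Filter.le_principal_iff, Filter.mem_map]
      exact Filter.univ_mem' fun φ => ⟨c φ, hcU φ, rfl⟩
    obtain ⟨u₀, hu₀K, hu₀cl⟩ := hUcomp hmapK
    set u₀' := (toWeakSpace ℝ C).symm u₀ with hu₀'def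
    have hu₀'U : u₀' ∈ U := by
      obtain ⟨u₁, hu₁U, hu₁⟩ := hu₀K
      rw [hu₀'def, ← hu₁, LinearEquiv.symm_apply_apply]; exact hu₁U
    -- fact A : g x u₀' = M
    have hA : g x u₀' = M := by
      have hcl : IsClosed {u : WeakSpace ℝ C | g x ((toWeakSpace ℝ C).symm u) = M} :=
        isClosed_eq (WeakBilin.eval_continuous (topDualPairing ℝ C).flip (g x))
          continuous_const
      have hmem : {u : WeakSpace ℝ C | g x ((toWeakSpace ℝ C).symm u) = M}
          ∈ Filter.map cw F := by
        rw [Filter.mem_map]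
        refine Filter.mem_of_superset hSmem ?_
        intro φ hφ
        simp only [Set.mem_preimage, Set.mem_setOf_eq, hcwdef,
          LinearEquiv.symm_apply_apply]
        exact ((hcP φ) hφ).1
      have := mem_closure_iff_clusterPt.mpr
        (hu₀cl.mono (Filter.le_principal_iff.mpr hmem))
      rw [hcl.closure_eq] at this
      exact this
    -- fact B : subgradient inequality for ψ at u₀'
    have hB : ∀ y : B, g x u₀' + ψ (y - x) ≤ g y u₀' := by
      intro y
      refine le_of_forall_pos_le_add ?_
      intro ε hε
      have hclA : IsClosed {u : WeakSpace ℝ C |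
          g x ((toWeakSpace ℝ C).symm u) + ψ (y - x)
            ≤ g y ((toWeakSpace ℝ C).symm u) + ε} :=
        isClosed_le
          ((WeakBilin.eval_continuous (topDualPairing ℝ C).flip (g x)).add
            continuous_const)
          ((WeakBilin.eval_continuous (topDualPairing ℝ C).flip (g y)).add
            continuous_const)
      have hV : {φ : WeakDual ℝ B | ψ (y - x) - ε < φ (y - x)} ∈ 𝓝 ψ := by
        have hop : IsOpen {φ : WeakDual ℝ B | ψ (y - x) - ε < φ (y - x)} :=
          isOpen_lt continuous_const (WeakDual.eval_continuous (y - x))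
        exact hop.mem_nhds (by simp [hε])
      have hmemA : {u : WeakSpace ℝ C |
          g x ((toWeakSpace ℝ C).symm u) + ψ (y - x)
            ≤ g y ((toWeakSpace ℝ C).symm u) + ε} ∈ Filter.map cw F := by
        rw [Filter.mem_map]
        refine Filter.mem_of_superset
          (Filter.inter_mem (Filter.mem_inf_of_left hV) hSmem) ?_
        rintro φ ⟨hφV, hφS⟩
        simp only [Set.mem_preimage, Set.mem_setOf_eq, hcwdef,
          LinearEquiv.symm_apply_apply]
        have h1 := ((hcP φ) hφS).2 y
        have h2 : ψ (y - x) - ε < φ (y - x) := hφV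
        linarith
      have := mem_closure_iff_clusterPt.mpr
        (hu₀cl.mono (Filter.le_principal_iff.mpr hmemA))
      rw [hclA.closure_eq] at this
      exact this
    refine ⟨StrongDual.toWeakDual.symm ψ, ?_, LinearEquiv.apply_symm_apply _ _⟩
    rw [hSdef, Set.mem_iUnion₂]
    exact ⟨u₀', ⟨hu₀'U, hA⟩, fun y => hB y⟩
  -- conclusion
  have himg : StrongDual.toWeakDual '' fenchelSubdiff G x
      = StrongDual.toWeakDual '' S := by
    rw [hDanskin, hconv.convexHull_eq]
    exact subset_antisymm hclosure subset_closure
  have hGS : fenchelSubdiff G x = S :=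
    Set.image_injective.mpr (LinearEquiv.injective _) himg
  exact ⟨hconv, hGS⟩
end

section
/- Let X be a real Banach space, xᵢ ∈ X and yᵢ ∈ {−1,+1} for i = 1,…,m, and consider the Lagrangian L₁(w, b; λ) = ½‖w‖² + Σᵢ λᵢ(1 − yᵢ(w(xᵢ) + b)) on X* × ℝ for fixed λ ∈ ℝ₊^m. If (w̄, b̄) minimizes L₁(·, ·; λ) over X* × ℝ, then Σᵢ λᵢ yᵢ = 0 and Σᵢ λᵢ yᵢ xᵢ belongs to the normalized duality mapping M(w̄) ⊆ X** evaluated via the canonical embedding, i.e. (Σᵢ λᵢ yᵢ xᵢ)(w̄) viewed as w̄(Σᵢ λᵢ yᵢ xᵢ) satisfies w̄(Σᵢ λᵢ yᵢ xᵢ) = ‖w̄‖² = ‖Σᵢ λᵢ yᵢ xᵢ‖². -/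
set_option maxHeartbeats 1000000
set_option synthInstance.maxHeartbeats 400000


theorem lagrangian_minimizer_duality_map_condition
    {X : Type*} [NormedAddCommGroup X] [NormedSpace ℝ X]
    [CompleteSpace X] {m : ℕ}
    (x : Fin m → X) (y : Fin m → ℝ) (hy : ∀ i, y i = 1 ∨ y i = -1)
    (lam : Fin m → ℝ) (hlam : ∀ i, 0 ≤ lam i)
    (wb : X →L[ℝ] ℝ) (bb : ℝ)
    (hmin : ∀ (w : X →L[ℝ] ℝ) (b : ℝ),
      (1 / 2 : ℝ) * ‖wb‖ ^ 2 + ∑ i, lam i * (1 - y i * (wb (x i) + bb)) ≤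
      (1 / 2 : ℝ) * ‖w‖ ^ 2 + ∑ i, lam i * (1 - y i * (w (x i) + b))) :
    (∑ i, lam i * y i) = 0 ∧
    wb (∑ i, (lam i * y i) • x i) = ‖wb‖ ^ 2 ∧
    ‖wb‖ ^ 2 = ‖∑ i, (lam i * y i) • x i‖ ^ 2 := by
  set s : ℝ := ∑ i, lam i * y i with hs_def
  set v : X := ∑ i, (lam i * y i) • x i with hv_def
  -- general expansion of the sum
  have ew : ∀ (w : X →L[ℝ] ℝ) (b : ℝ),
      ∑ i, lam i * (1 - y i * (w (x i) + b)) = (∑ i, lam i) - w v - b * s := by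
    intro w b
    rw [hv_def, map_sum, hs_def]
    simp only [map_smul, smul_eq_mul]
    rw [Finset.mul_sum, ← Finset.sum_sub_distrib, ← Finset.sum_sub_distrib]
    exact Finset.sum_congr rfl fun i _ => by ring
  -- s = 0
  have hs : s = 0 := by
    have h1 := hmin wb (bb + 1)
    have h2 := hmin wb (bb - 1)
    rw [ew wb (bb + 1), ew wb bb] at h1
    rw [ew wb (bb - 1), ew wb bb] at h2
    linarith
  -- key minimization inequality
  have key : ∀ w : X →L[ℝ] ℝ,
      (1 / 2 : ℝ) * ‖wb‖ ^ 2 - wb v ≤ (1 / 2 : ℝ) * ‖w‖ ^ 2 - w v := by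
    intro w
    have h := hmin w 0
    rw [ew wb bb, ew w 0, hs] at h
    linarith
  -- claim 1 : wb v = ‖wb‖^2
  have hA : wb v = ‖wb‖ ^ 2 := by
    by_cases hc : ‖wb‖ = 0
    · have hwb0 : wb = 0 := norm_eq_zero.mp hc
      simp [hwb0]
    · have hcpos : 0 < ‖wb‖ ^ 2 := by positivity
      set t : ℝ := wb v / ‖wb‖ ^ 2 with ht_def
      have h := key (t • wb)
      have hn : ‖t • wb‖ ^ 2 = t ^ 2 * ‖wb‖ ^ 2 := by
        rw [norm_smul t wb, mul_pow, Real.norm_eq_abs, sq_abs]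
      have happ : (t • wb) v = t * wb v := rfl
      rw [hn, happ] at h
      have ht : t * ‖wb‖ ^ 2 = wb v := by
        rw [ht_def]; exact div_mul_cancel₀ _ hcpos.ne'
      nlinarith [sq_nonneg (wb v - ‖wb‖ ^ 2)]
  refine ⟨hs, hA, ?_⟩
  -- claim 2 : ‖wb‖^2 = ‖v‖^2
  by_cases hv : v = 0
  · have : wb v = 0 := by rw [hv]; simp
    rw [hv]; rw [this] at hA
    simp [← hA]
  · obtain ⟨g, hg1, hgv⟩ := exists_dual_vector ℝ v (norm_ne_zero_iff.mpr hv)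
    have hgv' : g v = ‖v‖ := by exact_mod_cast hgv
    have h := key (‖v‖ • g)
    have hn : ‖(‖v‖ : ℝ) • g‖ ^ 2 = ‖v‖ ^ 2 := by
      rw [norm_smul (‖v‖) g, Real.norm_eq_abs, abs_norm, hg1, mul_one]
    have happ : ((‖v‖ : ℝ) • g) v = ‖v‖ * ‖v‖ := by
      show ‖v‖ * g v = ‖v‖ * ‖v‖
      rw [hgv']
    rw [hn, happ, hA] at h
    -- other direction: ‖wb‖^2 = wb v ≤ ‖wb‖ * ‖v‖
    have hle : wb v ≤ ‖wb‖ * ‖v‖ := by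
      calc wb v ≤ |wb v| := le_abs_self _
        _ ≤ ‖wb‖ * ‖v‖ := wb.le_opNorm v
    rw [hA] at hle
    have hnn : (0:ℝ) ≤ ‖wb‖ := norm_nonneg _
    have hnn2 : (0:ℝ) ≤ ‖v‖ := norm_nonneg _
    nlinarith
end
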